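/- arXiv:1502.02643 — 5 statements merged into one kernel-verified Lean document; each statement's English description precedes it below -/
import Mathlib

section
/- The optimal value of the primal proximal problem min over x in ℝⁿ of Σ_{i=1}^r ( f_i(x) + (1/(2r))‖x‖² ) equals the optimal value of the dual problem max over (y^(1),…,y^(r)) with y^(i) ∈ B(F_i) for each i of −(1/2)‖Σ_{i=1}^r y^(i)‖²; moreover, if (y^(1),…,y^(r)) is optimal for the dual, then x = −Σ_{i=1}^r y^(i) is optimal for the primal. -/
open scoped RealInnerProductSpace Pointwise

noncomputable section

/-- A set function on the ground set `V = {1,…,n}` (modeled as `Fin n`) is submodular if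
`F(A ∩ B) + F(A ∪ B) ≤ F(A) + F(B)` for all `A, B ⊆ V`. -/
def Submodular {n : ℕ} (F : Finset (Fin n) → ℝ) : Prop :=
  ∀ A B : Finset (Fin n), F (A ∩ B) + F (A ∪ B) ≤ F A + F B

/-- The base polytope `B(F) = {w ∈ ℝⁿ | ∀ A ⊆ V, w(A) ≤ F(A), and w(V) = F(V)}`. -/
def basePolytope (n : ℕ) (F : Finset (Fin n) → ℝ) : Set (EuclideanSpace ℝ (Fin n)) :=
  {w | (∀ A : Finset (Fin n), ∑ i ∈ A, w i ≤ F A) ∧ (∑ i, w i = F Finset.univ)}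

/-- `ℝ^{nr}` with the Euclidean norm, written in `r` blocks of `n` coordinates. -/
abbrev Vec (n r : ℕ) := PiLp 2 (fun _ : Fin r => EuclideanSpace ℝ (Fin n))

/-- The feasible set `𝒴 = ∏ᵢ B(Fᵢ)` of (Prox-DSM). -/
def feas (n r : ℕ) (F : Fin r → Finset (Fin n) → ℝ) : Set (Vec n r) :=
  {y | ∀ i, y i ∈ basePolytope n (F i)}

/-- The objective `g(y) = ‖∑ᵢ y⁽ⁱ⁾‖²` of (Prox-DSM). -/
def g (n r : ℕ) (y : Vec n r) : ℝ := ‖∑ i, y i‖ ^ 2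

/-- The `i`-th block of the gradient of `g`: `∇ᵢ g(y) = 2 ∑ⱼ y⁽ʲ⁾` (the same for every `i`). -/
def gradBlock (n r : ℕ) (y : Vec n r) : EuclideanSpace ℝ (Fin n) := (2 : ℝ) • ∑ j, y j

/-- The full gradient `∇g(y) ∈ ℝ^{nr}`, whose every block equals `2 ∑ⱼ y⁽ʲ⁾`. -/
def gradg (n r : ℕ) (y : Vec n r) : Vec n r := WithLp.toLp 2 (fun _ => gradBlock n r y)

/-- `y` is an optimal solution of (Prox-DSM). -/
def IsOptimal (n r : ℕ) (F : Fin r → Finset (Fin n) → ℝ) (y : Vec n r) : Prop :=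
  y ∈ feas n r F ∧ ∀ z ∈ feas n r F, g n r y ≤ g n r z

/-- The linear map `S = (1/√r)[Iₙ Iₙ ⋯ Iₙ]`, i.e. `S y = (1/√r) ∑ᵢ y⁽ⁱ⁾`. -/
def Smap (n r : ℕ) (y : Vec n r) : EuclideanSpace ℝ (Fin n) := (Real.sqrt r)⁻¹ • ∑ i, y i

/-- Distance between two sets: `d(K₁, K₂) = inf{‖k₁ - k₂‖ : k₁ ∈ K₁, k₂ ∈ K₂}`. -/
def setDist {E : Type*} [PseudoMetricSpace E] (A B : Set E) : ℝ :=
  sInf ((fun p : E × E => dist p.1 p.2) '' (A ×ˢ B))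

/-- The Lovász extension `f(x) = max_{w ∈ B(F)} ⟨w, x⟩`. -/
def lovasz (n : ℕ) (F : Finset (Fin n) → ℝ) (x : EuclideanSpace ℝ (Fin n)) : ℝ :=
  sSup ((fun w => ⟪w, x⟫) '' basePolytope n F)

/-- The primal proximal objective `∑ᵢ ( fᵢ(x) + (1/(2r))‖x‖² )`. -/
def primalObj (n r : ℕ) (F : Fin r → Finset (Fin n) → ℝ) (x : EuclideanSpace ℝ (Fin n)) : ℝ :=
  ∑ i : Fin r, (lovasz n (F i) x + (1 / (2 * (r : ℝ))) * ‖x‖ ^ 2)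

/-- The dual objective `-(1/2)‖∑ᵢ y⁽ⁱ⁾‖²`. -/
def dualObj (n r : ℕ) (y : Vec n r) : ℝ := -(1 / 2) * ‖∑ i, y i‖ ^ 2

namespace Aux
open Finset

variable {n : ℕ}

/-- `G F A k = F (A ∩ {j | j < k})`. -/
def G (F : Finset (Fin n) → ℝ) (A : Finset (Fin n)) (k : ℕ) : ℝ :=
  F (A.filter (fun j : Fin n => (j : ℕ) < k))

lemma G_top (F : Finset (Fin n) → ℝ) (A : Finset (Fin n)) : G F A n = F A := by
  unfold G
  congr 1
  apply Finset.filter_true_of_mem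
  intro j _
  exact j.isLt

lemma G_zero (F : Finset (Fin n) → ℝ) (A : Finset (Fin n)) : G F A 0 = F ∅ := by
  unfold G
  congr 1
  simp

lemma tele (F : Finset (Fin n) → ℝ) (A : Finset (Fin n)) :
    ∑ i : Fin n, (G F A ((i : ℕ) + 1) - G F A (i : ℕ)) = F A - F ∅ := by
  rw [Fin.sum_univ_eq_sum_range (fun k => G F A (k + 1) - G F A k)]
  rw [Finset.sum_range_sub (fun k => G F A k)]
  rw [G_top, G_zero]

/-- greedy vertex. -/
def greedy (F : Finset (Fin n) → ℝ) : EuclideanSpace ℝ (Fin n) :=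
  WithLp.toLp 2 (fun i => G F univ ((i : ℕ) + 1) - G F univ (i : ℕ))

lemma greedy_step {F : Finset (Fin n) → ℝ} (hsub : Submodular F)
    {A : Finset (Fin n)} {i : Fin n} (hi : i ∈ A) :
    greedy F i ≤ G F A ((i : ℕ) + 1) - G F A (i : ℕ) := by
  have key := hsub (A.filter (fun j : Fin n => (j : ℕ) < (i : ℕ) + 1))
    (univ.filter (fun j : Fin n => (j : ℕ) < (i : ℕ)))
  have h1 : (A.filter (fun j : Fin n => (j : ℕ) < (i : ℕ) + 1)) ∩
      (univ.filter (fun j : Fin n => (j : ℕ) < (i : ℕ))) = A.filter (fun j : Fin n => (j : ℕ) < (i : ℕ)) := by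
    ext j; simp only [Finset.mem_inter, Finset.mem_filter, Finset.mem_univ, true_and]
    constructor
    · rintro ⟨⟨hj, _⟩, hlt⟩; exact ⟨hj, hlt⟩
    · rintro ⟨hj, hlt⟩; exact ⟨⟨hj, by omega⟩, hlt⟩
  have h2 : (A.filter (fun j : Fin n => (j : ℕ) < (i : ℕ) + 1)) ∪
      (univ.filter (fun j : Fin n => (j : ℕ) < (i : ℕ))) =
      univ.filter (fun j : Fin n => (j : ℕ) < (i : ℕ) + 1) := by
    ext j; simp only [Finset.mem_union, Finset.mem_filter, Finset.mem_univ, true_and]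
    constructor
    · rintro (⟨_, h⟩ | h) <;> omega
    · intro h
      rcases Nat.lt_or_ge (j : ℕ) (i : ℕ) with h' | h'
      · exact Or.inr h'
      · have : j = i := Fin.ext (by omega)
        exact Or.inl ⟨this ▸ hi, h⟩
  rw [h1, h2] at key
  unfold greedy G
  simp only [WithLp.ofLp_toLp]
  linarith

lemma greedy_step_zero {F : Finset (Fin n) → ℝ} {A : Finset (Fin n)} {i : Fin n} (hi : i ∉ A) :
    G F A ((i : ℕ) + 1) - G F A (i : ℕ) = 0 := by
  unfold G
  have : (A.filter (fun j : Fin n => (j : ℕ) < (i : ℕ) + 1)) = A.filter (fun j : Fin n => (j : ℕ) < (i : ℕ)) := by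
    ext j; simp only [Finset.mem_filter]
    constructor
    · rintro ⟨hj, h⟩
      refine ⟨hj, ?_⟩
      rcases Nat.lt_or_ge (j : ℕ) (i : ℕ) with h' | h'
      · exact h'
      · exact absurd (Fin.ext (by omega : (j:ℕ) = (i:ℕ)) ▸ hj) hi
    · rintro ⟨hj, h⟩; exact ⟨hj, by omega⟩
  rw [this]; ring

lemma greedy_mem {F : Finset (Fin n) → ℝ} (hsub : Submodular F) (h0 : F ∅ = 0) :
    greedy F ∈ basePolytope n F := by
  constructor
  · intro A
    calc ∑ i ∈ A, greedy F i ≤ ∑ i ∈ A, (G F A ((i : ℕ) + 1) - G F A (i : ℕ)) :=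
          Finset.sum_le_sum (fun i hi => greedy_step hsub hi)
    _ = ∑ i : Fin n, (G F A ((i : ℕ) + 1) - G F A (i : ℕ)) := by
          apply Finset.sum_subset (Finset.subset_univ A)
          intro i _ hi; exact greedy_step_zero hi
    _ = F A - F ∅ := tele F A
    _ = F A := by rw [h0]; ring
  · have := tele F univ
    unfold greedy
    simp only [WithLp.ofLp_toLp]
    rw [this, h0]; ring

variable {n : ℕ}

lemma base_convex (F : Finset (Fin n) → ℝ) : Convex ℝ (basePolytope n F) := by
  intro u hu v hv a b ha hb hab
  have happ : ∀ (A : Finset (Fin n)), ∑ i ∈ A, (a • u + b • v) i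
      = a * ∑ i ∈ A, u i + b * ∑ i ∈ A, v i := by
    intro A
    rw [Finset.mul_sum, Finset.mul_sum, ← Finset.sum_add_distrib]
    apply Finset.sum_congr rfl
    intro i _
    simp [PiLp.add_apply, PiLp.smul_apply, smul_eq_mul]
  constructor
  · intro A
    rw [happ A]
    calc a * ∑ i ∈ A, u i + b * ∑ i ∈ A, v i ≤ a * F A + b * F A := by
          gcongr <;> [exact hu.1 A; exact hv.1 A]
    _ = F A := by rw [← add_mul, hab, one_mul]
  · rw [happ univ, hu.2, hv.2, ← add_mul, hab, one_mul]

lemma base_closed (F : Finset (Fin n) → ℝ) : IsClosed (basePolytope n F) := by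
  have : basePolytope n F =
      (⋂ A : Finset (Fin n), {w : EuclideanSpace ℝ (Fin n) | ∑ i ∈ A, w i ≤ F A}) ∩
      {w : EuclideanSpace ℝ (Fin n) | ∑ i, w i = F univ} := by
    ext w; simp [basePolytope, Set.mem_iInter]
  rw [this]
  exact (isClosed_iInter fun A => isClosed_le
      (continuous_finset_sum _ fun i _ => PiLp.continuous_apply 2 _ i) continuous_const).inter
    (isClosed_eq (continuous_finset_sum _ fun i _ => PiLp.continuous_apply 2 _ i) continuous_const)

lemma base_bounded (F : Finset (Fin n) → ℝ) :
    ∃ C : ℝ, 0 ≤ C ∧ ∀ w ∈ basePolytope n F, ‖w‖ ≤ C := by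
  set M : Fin n → ℝ := fun i => max |F {i}| |F univ - F (univ.erase i)| with hM
  refine ⟨Real.sqrt (∑ i, M i ^ 2), Real.sqrt_nonneg _, fun w hw => ?_⟩
  have hco : ∀ i, |w i| ≤ M i := by
    intro i
    have hup : w i ≤ F {i} := by
      have := hw.1 {i}
      simpa using this
    have hlo : F univ - F (univ.erase i) ≤ w i := by
      have h1 : ∑ j ∈ univ.erase i, w j ≤ F (univ.erase i) := hw.1 _
      have h2 : w i + ∑ j ∈ univ.erase i, w j = ∑ j, w j :=
        Finset.add_sum_erase univ w (mem_univ i)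
      have := hw.2
      linarith
    rw [abs_le]
    constructor
    · calc -M i ≤ -|F univ - F (univ.erase i)| := by
            simp only [neg_le_neg_iff, hM]; exact le_max_right _ _
      _ ≤ F univ - F (univ.erase i) := neg_abs_le _
      _ ≤ w i := hlo
    · calc w i ≤ F {i} := hup
      _ ≤ |F {i}| := le_abs_self _
      _ ≤ M i := le_max_left _ _
  rw [EuclideanSpace.norm_eq]
  apply Real.sqrt_le_sqrt
  apply Finset.sum_le_sum
  intro i _
  rw [Real.norm_eq_abs]
  calc |w i| ^ 2 ≤ M i ^ 2 := by
        apply sq_le_sq'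
        · linarith [hco i, abs_nonneg (w i)]
        · exact hco i
  _ = M i ^ 2 := rfl

lemma base_compact (F : Finset (Fin n) → ℝ) : IsCompact (basePolytope n F) := by
  obtain ⟨C, _, hC⟩ := base_bounded F
  apply Metric.isCompact_of_isClosed_isBounded (base_closed F)
  rw [Metric.isBounded_iff_subset_closedBall 0]
  exact ⟨C, fun w hw => by simpa [Metric.mem_closedBall, dist_zero_right] using hC w hw⟩

variable {n r : ℕ}

lemma feas_closed (F : Fin r → Finset (Fin n) → ℝ) : IsClosed (feas n r F) := by
  have : feas n r F = ⋂ i, (fun y : Vec n r => y i) ⁻¹' basePolytope n (F i) := by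
    ext y; simp [feas, Set.mem_iInter]
  rw [this]
  exact isClosed_iInter fun i => (base_closed (F i)).preimage (PiLp.continuous_apply 2 _ i)

lemma feas_compact (F : Fin r → Finset (Fin n) → ℝ) : IsCompact (feas n r F) := by
  choose C hC0 hC using fun i => base_bounded (F i)
  apply Metric.isCompact_of_isClosed_isBounded (feas_closed F)
  rw [Metric.isBounded_iff_subset_closedBall 0]
  refine ⟨Real.sqrt (∑ i, C i ^ 2), fun y hy => ?_⟩
  rw [Metric.mem_closedBall, dist_zero_right]
  have h1 : ‖y‖ = Real.sqrt (‖y‖ ^ 2) := (Real.sqrt_sq (norm_nonneg y)).symm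
  rw [h1]
  apply Real.sqrt_le_sqrt
  rw [PiLp.norm_sq_eq_of_L2]
  apply Finset.sum_le_sum
  intro i _
  have := hC i (y i) (hy i)
  nlinarith [norm_nonneg (y i)]

lemma sum_continuous : Continuous (fun y : Vec n r => ∑ i, y i) :=
  continuous_finset_sum _ fun i _ => PiLp.continuous_apply 2 _ i

lemma dual_continuous : Continuous (dualObj n r) :=
  continuous_const.mul ((sum_continuous.norm).pow 2)

lemma lovasz_ge (F : Finset (Fin n) → ℝ) (x : EuclideanSpace ℝ (Fin n))
    {w : EuclideanSpace ℝ (Fin n)} (hw : w ∈ basePolytope n F) : ⟪w, x⟫ ≤ lovasz n F x := by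
  apply le_csSup
  · exact ((base_compact F).image (continuous_id.inner continuous_const)).bddAbove
  · exact Set.mem_image_of_mem _ hw

lemma primal_eq (hr : 1 ≤ r) (F : Fin r → Finset (Fin n) → ℝ) (x : EuclideanSpace ℝ (Fin n)) :
    primalObj n r F x = (∑ i, lovasz n (F i) x) + ‖x‖ ^ 2 / 2 := by
  unfold primalObj
  rw [Finset.sum_add_distrib, Finset.sum_const, card_univ, Fintype.card_fin]
  have hrne : (r : ℝ) ≠ 0 := Nat.cast_ne_zero.mpr (by omega)
  field_simp
  rw [nsmul_eq_mul]
  field_simp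

lemma weak_duality (hr : 1 ≤ r) (F : Fin r → Finset (Fin n) → ℝ)
    (x : EuclideanSpace ℝ (Fin n)) {y : Vec n r} (hy : y ∈ feas n r F) :
    dualObj n r y ≤ primalObj n r F x := by
  rw [primal_eq hr F x]
  set s : EuclideanSpace ℝ (Fin n) := ∑ i, y i with hs
  have h1 : ⟪s, x⟫ ≤ ∑ i, lovasz n (F i) x := by
    rw [hs, sum_inner]
    exact Finset.sum_le_sum fun i _ => lovasz_ge (F i) x (hy i)
  have h2 : (0:ℝ) ≤ ‖x + s‖ ^ 2 := sq_nonneg _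
  rw [norm_add_sq_real] at h2
  have h3 : ⟪x, s⟫ = ⟪s, x⟫ := real_inner_comm s x
  unfold dualObj
  rw [← hs]
  nlinarith

lemma opt_inner (F : Fin r → Finset (Fin n) → ℝ)
    {y : Vec n r} (hy : y ∈ feas n r F)
    (hopt : ∀ z ∈ feas n r F, dualObj n r z ≤ dualObj n r y)
    (i : Fin r) {w : EuclideanSpace ℝ (Fin n)} (hw : w ∈ basePolytope n (F i)) :
    0 ≤ ⟪∑ j, y j, w - y i⟫ := by
  set s : EuclideanSpace ℝ (Fin n) := ∑ j, y j with hs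
  set d : EuclideanSpace ℝ (Fin n) := w - y i with hd
  have key : ∀ t : ℝ, 0 < t → t ≤ 1 → 0 ≤ 2 * t * ⟪s, d⟫ + t ^ 2 * ‖d‖ ^ 2 := by
    intro t ht0 ht1
    set z : Vec n r := WithLp.toLp 2 (Function.update y.ofLp i (y i + t • d)) with hz
    have hzfeas : z ∈ feas n r F := by
      intro j
      by_cases hj : j = i
      · subst hj
        rw [hz, WithLp.ofLp_toLp, Function.update_self]
        have : y j + t • d = (1 - t) • y j + t • w := by
          rw [hd, smul_sub, sub_smul, one_smul]
          abel
        rw [this]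
        exact base_convex (F j) (hy j) hw (by linarith) (le_of_lt ht0) (by ring)
      · rw [hz, WithLp.ofLp_toLp, Function.update_of_ne hj]
        exact hy j
    have hsum : ∑ j, z j = s + t • d := by
      rw [hz, WithLp.ofLp_toLp, Finset.sum_update_of_mem (mem_univ i)]
      have h5 : s = y i + ∑ j ∈ univ \ {i}, y j := by
        rw [← Finset.erase_eq]
        exact (Finset.add_sum_erase univ y (mem_univ i)).symm
      rw [h5]
      abel
    have hle := hopt z hzfeas
    unfold dualObj at hle
    rw [hsum, ← hs] at hle
    have h4 : ‖s‖ ^ 2 ≤ ‖s + t • d‖ ^ 2 := by linarith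
    rw [norm_add_sq_real, real_inner_smul_right, norm_smul, Real.norm_eq_abs,
      abs_of_pos ht0, mul_pow] at h4
    nlinarith
  by_contra hcon
  push_neg at hcon
  have hd0 : d ≠ 0 := by
    intro h
    rw [h, inner_zero_right] at hcon
    exact lt_irrefl 0 hcon
  have hdn : (0:ℝ) < ‖d‖ ^ 2 := pow_pos (norm_pos_iff.mpr hd0) 2
  set t : ℝ := min 1 (-⟪s, d⟫ / ‖d‖ ^ 2) with ht
  have ht0 : 0 < t := lt_min one_pos (div_pos (neg_pos.mpr hcon) hdn)
  have ht1 : t ≤ 1 := min_le_left _ _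
  have hkey := key t ht0 ht1
  have htd : t * ‖d‖ ^ 2 ≤ -⟪s, d⟫ := by
    have : t ≤ -⟪s, d⟫ / ‖d‖ ^ 2 := min_le_right _ _
    calc t * ‖d‖ ^ 2 ≤ (-⟪s, d⟫ / ‖d‖ ^ 2) * ‖d‖ ^ 2 := by gcongr
    _ = -⟪s, d⟫ := div_mul_cancel₀ _ (ne_of_gt hdn)
  nlinarith

variable {n r : ℕ}

lemma dualopt_primal (hr : 1 ≤ r) (F : Fin r → Finset (Fin n) → ℝ)
    {y : Vec n r} (hy : y ∈ feas n r F)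
    (hopt : ∀ z ∈ feas n r F, dualObj n r z ≤ dualObj n r y) :
    primalObj n r F (-∑ i, y i) = dualObj n r y := by
  set s : EuclideanSpace ℝ (Fin n) := ∑ i, y i with hs
  rw [primal_eq hr]
  have hlov : ∀ i, lovasz n (F i) (-s) = ⟪y i, -s⟫ := by
    intro i
    apply IsGreatest.csSup_eq
    constructor
    · exact Set.mem_image_of_mem _ (hy i)
    · rintro v ⟨w, hw, rfl⟩
      have h := opt_inner F hy hopt i hw
      rw [← hs, inner_sub_right] at h
      have e1 : ⟪w, -s⟫ = -⟪s, w⟫ := by rw [inner_neg_right, real_inner_comm]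
      have e2 : ⟪y i, -s⟫ = -⟪s, y i⟫ := by rw [inner_neg_right, real_inner_comm]
      simp only [e1, e2]
      linarith
  have hsumlov : ∑ i, lovasz n (F i) (-s) = -‖s‖ ^ 2 := by
    calc ∑ i, lovasz n (F i) (-s) = ∑ i, ⟪y i, -s⟫ := Finset.sum_congr rfl fun i _ => hlov i
    _ = ⟪s, -s⟫ := by rw [hs, sum_inner]
    _ = -‖s‖ ^ 2 := by rw [inner_neg_right, real_inner_self_eq_norm_sq]
  rw [hsumlov, norm_neg]
  unfold dualObj
  rw [← hs]
  ring

theorem statement0' (n r : ℕ) (hn : 1 ≤ n) (hr : 1 ≤ r)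
    (F : Fin r → Finset (Fin n) → ℝ)
    (hsub : ∀ i, Submodular (F i)) (hnorm : ∀ i, F i ∅ = 0) :
    sInf (Set.range (primalObj n r F)) = sSup (dualObj n r '' feas n r F) ∧
    ∀ y ∈ feas n r F, (∀ z ∈ feas n r F, dualObj n r z ≤ dualObj n r y) →
      ∀ x : EuclideanSpace ℝ (Fin n),
        primalObj n r F (-∑ i, y i) ≤ primalObj n r F x := by
  have hfne : (feas n r F).Nonempty := by
    choose w hw using fun i => (⟨greedy (F i), greedy_mem (hsub i) (hnorm i)⟩ : (basePolytope n (F i)).Nonempty)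
    exact ⟨(WithLp.toLp 2 (fun i => w i) : Vec n r), fun i => hw i⟩
  obtain ⟨ys, hys, hysopt'⟩ := (feas_compact F).exists_isMaxOn hfne
    (dual_continuous (n := n) (r := r)).continuousOn
  have hysopt : ∀ z ∈ feas n r F, dualObj n r z ≤ dualObj n r ys := fun z hz => hysopt' hz
  constructor
  · have hval : primalObj n r F (-∑ i, ys i) = dualObj n r ys :=
      dualopt_primal hr F hys hysopt
    have hbdd : BddBelow (Set.range (primalObj n r F)) := by
      refine ⟨dualObj n r ys, ?_⟩
      rintro v ⟨x, rfl⟩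
      exact weak_duality hr F x hys
    have hle : sInf (Set.range (primalObj n r F)) ≤ dualObj n r ys := by
      rw [← hval]
      exact csInf_le hbdd ⟨_, rfl⟩
    have hge : dualObj n r ys ≤ sInf (Set.range (primalObj n r F)) := by
      apply le_csInf (Set.range_nonempty _)
      rintro v ⟨x, rfl⟩
      exact weak_duality hr F x hys
    have hsup : sSup (dualObj n r '' feas n r F) = dualObj n r ys := by
      apply IsGreatest.csSup_eq
      constructor
      · exact Set.mem_image_of_mem _ hys
      · rintro v ⟨z, hz, rfl⟩
        exact hysopt z hz
    rw [hsup]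
    exact le_antisymm hle hge
  · intro y hy hopt x
    rw [dualopt_primal hr F hy hopt]
    exact weak_duality hr F x hy

end Aux

/-- The optimal value of the primal proximal problem equals the optimal
value of the dual problem, and if `y` is dual optimal then `x = -∑ᵢ y⁽ⁱ⁾` is primal optimal. -/
theorem statement0 (n r : ℕ) (hn : 1 ≤ n) (hr : 1 ≤ r)
    (F : Fin r → Finset (Fin n) → ℝ)
    (hsub : ∀ i, Submodular (F i)) (hnorm : ∀ i, F i ∅ = 0) :
    sInf (Set.range (primalObj n r F)) = sSup (dualObj n r '' feas n r F) ∧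
    ∀ y ∈ feas n r F, (∀ z ∈ feas n r F, dualObj n r z ≤ dualObj n r y) →
      ∀ x : EuclideanSpace ℝ (Fin n),
        primalObj n r F (-∑ i, y i) ≤ primalObj n r F x :=
  Aux.statement0' n r hn hr F hsub hnorm
end
end

section
/- Let y ∈ 𝒴 be a feasible solution to (Prox-DSM) and let y* be an optimal solution to (Prox-DSM) that minimizes ‖y − y*‖ over all optimal solutions. Then ‖S(y − y*)‖ ≥ (1/(nr)) ‖y − y*‖. -/
open scoped RealInnerProductSpace Pointwise

noncomputable section

namespace Prox


variable {n r : ℕ}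

/-- membership in the base polytope, function version -/
def inB (F : Finset (Fin n) → ℝ) (x : Fin n → ℝ) : Prop :=
  (∀ A : Finset (Fin n), ∑ u ∈ A, x u ≤ F A) ∧ ∑ u, x u = F Finset.univ

lemma tight_inter_union {F : Finset (Fin n) → ℝ} (hF : Submodular F) {x : Fin n → ℝ}
    (hx : ∀ A, ∑ u ∈ A, x u ≤ F A)
    {A B : Finset (Fin n)} (hA : ∑ u ∈ A, x u = F A) (hB : ∑ u ∈ B, x u = F B) :
    (∑ u ∈ A ∩ B, x u = F (A ∩ B)) ∧ (∑ u ∈ A ∪ B, x u = F (A ∪ B)) := by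
  have h1 := hF A B
  have h2 := Finset.sum_union_inter (s₁ := A) (s₂ := B) (f := x)
  have h3 := hx (A ∩ B)
  have h4 := hx (A ∪ B)
  constructor <;> linarith

lemma exists_min_tight {F : Finset (Fin n) → ℝ} (hF : Submodular F) {x : Fin n → ℝ}
    (hx : inB F x) (v : Fin n) :
    ∃ D : Finset (Fin n), (∑ u ∈ D, x u = F D) ∧ v ∈ D ∧
      ∀ A, (∑ u ∈ A, x u = F A) → v ∈ A → D ⊆ A := by
  classical
  set s : Finset (Finset (Fin n)) :=
    Finset.univ.powerset.filter (fun A => (∑ u ∈ A, x u = F A) ∧ v ∈ A) with hs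
  have hne : s.Nonempty := by
    refine ⟨Finset.univ, ?_⟩
    rw [hs, Finset.mem_filter]
    exact ⟨Finset.mem_powerset.mpr (Finset.subset_univ _), hx.2, Finset.mem_univ v⟩
  have hmem : s.inf' hne id ∈ {A : Finset (Fin n) | (∑ u ∈ A, x u = F A) ∧ v ∈ A} := by
    apply Finset.inf'_mem
    · rintro a ⟨ha1, ha2⟩ b ⟨hb1, hb2⟩
      exact ⟨(tight_inter_union hF hx.1 ha1 hb1).1, Finset.mem_inter.mpr ⟨ha2, hb2⟩⟩
    · intro A hA
      exact (Finset.mem_filter.mp hA).2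
  refine ⟨s.inf' hne id, hmem.1, hmem.2, ?_⟩
  intro A hA hv
  show s.inf' hne id ≤ A
  refine Finset.inf'_le id ?_
  rw [hs, Finset.mem_filter]
  exact ⟨Finset.mem_powerset.mpr (Finset.subset_univ _), hA, hv⟩

lemma move_feasible {F : Finset (Fin n) → ℝ} {x h : Fin n → ℝ}
    (hx : inB F x) (hsum : ∑ u, h u = 0)
    (htight : ∀ A : Finset (Fin n), (∑ u ∈ A, x u = F A) → ∑ u ∈ A, h u ≤ 0) :
    ∃ ε > 0, ∀ α : ℝ, 0 ≤ α → α ≤ ε → inB F (fun u => x u + α * h u) := by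
  classical
  set 𝒜 : Finset (Finset (Fin n)) :=
    Finset.univ.powerset.filter (fun A => 0 < ∑ u ∈ A, h u) with h𝒜
  have key : ∀ ε : ℝ, 0 < ε → (∀ A ∈ 𝒜, ε ≤ (F A - ∑ u ∈ A, x u) / (∑ u ∈ A, h u)) →
      ∀ α : ℝ, 0 ≤ α → α ≤ ε → inB F (fun u => x u + α * h u) := by
    intro ε hε hεle α hα0 hαε
    constructor
    · intro A
      have hsplit : ∑ u ∈ A, (x u + α * h u) = (∑ u ∈ A, x u) + α * ∑ u ∈ A, h u := by
        rw [Finset.sum_add_distrib, Finset.mul_sum]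
      rw [hsplit]
      by_cases hpos : 0 < ∑ u ∈ A, h u
      · have hAmem : A ∈ 𝒜 := by
          rw [h𝒜, Finset.mem_filter]
          exact ⟨Finset.mem_powerset.mpr (Finset.subset_univ _), hpos⟩
        have hα' : α ≤ (F A - ∑ u ∈ A, x u) / (∑ u ∈ A, h u) := le_trans hαε (hεle A hAmem)
        have := (le_div_iff₀ hpos).mp hα'
        linarith
      · push_neg at hpos
        have := hx.1 A
        nlinarith
    · have hsplit : ∑ u, (x u + α * h u) = (∑ u, x u) + α * ∑ u, h u := by
        rw [Finset.sum_add_distrib, Finset.mul_sum]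
      rw [hsplit, hsum, hx.2]; ring
  by_cases hne : 𝒜.Nonempty
  · have hpos : 0 < 𝒜.inf' hne (fun A => (F A - ∑ u ∈ A, x u) / (∑ u ∈ A, h u)) := by
      rw [Finset.lt_inf'_iff]
      intro A hA
      have hhA : 0 < ∑ u ∈ A, h u := (Finset.mem_filter.mp hA).2
      have hgap : ∑ u ∈ A, x u < F A := by
        rcases lt_or_eq_of_le (hx.1 A) with h' | h'
        · exact h'
        · exact absurd (htight A h') (not_le.mpr hhA)
      exact div_pos (by linarith) hhA
    exact ⟨_, hpos, key _ hpos (fun A hA => Finset.inf'_le _ hA)⟩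
  · exact ⟨1, one_pos, key 1 one_pos (fun A hA => absurd ⟨A, hA⟩ hne)⟩


lemma exists_augpath (hr : 0 < r) {F : Fin r → Finset (Fin n) → ℝ}
    (hsub : ∀ i, Submodular (F i))
    {z w : Fin r → Fin n → ℝ} (hz : ∀ i, inB (F i) (z i)) (hw : ∀ i, inB (F i) (w i))
    (hne0 : ∃ u, ∑ i, z i u ≠ ∑ i, w i u) :
    ∃ k : ℕ, 1 ≤ k ∧ ∃ p : ℕ → Fin n, ∃ bb : ℕ → Fin r,
      (∀ j, j ≤ k → ∀ j', j' ≤ k → p j = p j' → j = j') ∧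
      (∀ j, j < k → ∀ A, (∑ u ∈ A, z (bb j) u = F (bb j) A) → p (j+1) ∈ A → p j ∈ A) ∧
      (∑ i, w i (p 0) < ∑ i, z i (p 0)) ∧ (∑ i, z i (p k) < ∑ i, w i (p k)) := by
  classical
  set S : Fin n → ℝ := fun u => ∑ i, z i u with hS
  set t : Fin n → ℝ := fun u => ∑ i, w i u with ht
  set Rel : Fin n → Fin n → Prop :=
    fun u v => ∃ i, ∀ A, (∑ x ∈ A, z i x = F i A) → v ∈ A → u ∈ A with hRel
  set reach : ℕ → Set (Fin n) :=
    fun m => Nat.rec {u | t u < S u} (fun _ Rm => Rm ∪ {v | ∃ u ∈ Rm, Rel u v}) m with hreach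
  have reach_succ : ∀ m, reach (m+1) = reach m ∪ {v | ∃ u ∈ reach m, Rel u v} := fun m => rfl
  have reach_mono : ∀ m m', m ≤ m' → reach m ⊆ reach m' := by
    intro m m' hmm
    induction hmm with
    | refl => exact subset_rfl
    | step _ ih => exact ih.trans (by rw [reach_succ]; exact Set.subset_union_left)
  -- total balance
  have hsumS : ∑ u, S u = ∑ i, F i Finset.univ := by
    rw [hS, Finset.sum_comm]
    exact Finset.sum_congr rfl fun i _ => (hz i).2
  have hsumt : ∑ u, t u = ∑ i, F i Finset.univ := by
    rw [ht, Finset.sum_comm]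
    exact Finset.sum_congr rfl fun i _ => (hw i).2
  have hbal : ∑ u, (S u - t u) = 0 := by
    rw [Finset.sum_sub_distrib, hsumS, hsumt]; ring
  obtain ⟨u0, hu0⟩ := hne0
  have hu0' : S u0 ≠ t u0 := hu0
  have hUplus : ∃ u, t u < S u := by
    by_contra hc
    push_neg at hc
    have hnonneg : ∀ u ∈ Finset.univ, 0 ≤ t u - S u := fun u _ => by
      have := hc u; linarith
    have hzero : ∑ u, (t u - S u) = 0 := by
      rw [Finset.sum_sub_distrib, hsumS, hsumt]; ring
    have := (Finset.sum_eq_zero_iff_of_nonneg hnonneg).mp hzero u0 (Finset.mem_univ u0)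
    have : S u0 = t u0 := by linarith
    exact hu0' this
  have hUminus : ∃ u, S u < t u := by
    by_contra hc
    push_neg at hc
    have hnonneg : ∀ u ∈ Finset.univ, 0 ≤ S u - t u := fun u _ => by
      have := hc u; linarith
    have := (Finset.sum_eq_zero_iff_of_nonneg hnonneg).mp hbal u0 (Finset.mem_univ u0)
    have : S u0 = t u0 := by linarith
    exact hu0' this
  -- a deficit vertex is reachable
  have hreachable : ∃ b, S b < t b ∧ ∃ m, b ∈ reach m := by
    by_contra hcon
    push_neg at hcon
    set Rc : Finset (Fin n) := Finset.univ.filter (fun v => ∀ m, v ∉ reach m) with hRc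
    obtain ⟨b, hb⟩ := hUminus
    have hbRc : b ∈ Rc := by
      rw [hRc, Finset.mem_filter]
      exact ⟨Finset.mem_univ b, hcon b hb⟩
    have hRcne : Rc.Nonempty := ⟨b, hbRc⟩
    have hmemRc : ∀ v, v ∈ Rc ↔ ∀ m, v ∉ reach m := by
      intro v; rw [hRc, Finset.mem_filter]
      exact ⟨fun h => h.2, fun h => ⟨Finset.mem_univ v, h⟩⟩
    have htightRc : ∀ i, ∑ u ∈ Rc, z i u = F i Rc := by
      intro i
      choose D hD1 hD2 hD3 using fun v => exists_min_tight (hsub i) (hz i) v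
      have hDsub : ∀ v ∈ Rc, D v ⊆ Rc := by
        intro v hv u hu
        by_contra huR
        have : ∃ m, u ∈ reach m := by
          by_contra hm
          push_neg at hm
          exact huR ((hmemRc u).mpr hm)
        obtain ⟨m, hm⟩ := this
        have hRuv : Rel u v := ⟨i, fun A hA hvA => hD3 v A hA hvA hu⟩
        have : v ∈ reach (m+1) := by
          rw [reach_succ]
          exact Or.inr ⟨u, hm, hRuv⟩
        exact (hmemRc v).mp hv (m+1) this
      have hTtight : Rc.sup' hRcne D ∈
          {A : Finset (Fin n) | ∑ u ∈ A, z i u = F i A} := by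
        apply Finset.sup'_mem
        · intro a ha b' hb'
          exact (tight_inter_union (hsub i) (hz i).1 ha hb').2
        · intro v _
          exact hD1 v
      have hTeq : Rc.sup' hRcne D = Rc := by
        apply le_antisymm
        · exact Finset.sup'_le _ _ hDsub
        · intro v hv
          exact Finset.mem_of_subset (Finset.le_sup' D hv) (hD2 v)
      rw [← hTeq]
      exact hTtight
    -- sum contradiction
    have h1 : ∑ u ∈ Rc, t u ≤ ∑ u ∈ Rc, S u := by
      have e1 : ∑ u ∈ Rc, t u = ∑ i, ∑ u ∈ Rc, w i u := by
        rw [ht]; exact Finset.sum_comm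
      have e2 : ∑ u ∈ Rc, S u = ∑ i, ∑ u ∈ Rc, z i u := by
        rw [hS]; exact Finset.sum_comm
      rw [e1, e2]
      apply Finset.sum_le_sum
      intro i _
      rw [htightRc i]
      exact (hw i).1 Rc
    have h2 : ∑ u ∈ Rc, S u < ∑ u ∈ Rc, t u := by
      apply Finset.sum_lt_sum
      · intro u hu
        have : u ∉ reach 0 := (hmemRc u).mp hu 0
        have : ¬ (t u < S u) := this
        linarith
      · exact ⟨b, hbRc, hb⟩
    linarith
  -- path extraction
  have hpath : ∀ m, ∀ v ∈ reach m, ∃ k, k ≤ m ∧ ∃ p : ℕ → Fin n,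
      p k = v ∧ (t (p 0) < S (p 0)) ∧
      (∀ j, j < k → Rel (p j) (p (j+1))) ∧
      (∀ j, j ≤ k → p j ∈ reach j) ∧ (∀ j, 1 ≤ j → j ≤ k → p j ∉ reach (j-1)) := by
    intro m
    induction m with
    | zero =>
      intro v hv
      exact ⟨0, le_rfl, fun _ => v, rfl, hv, fun j hj => absurd hj (Nat.not_lt_zero j),
        fun j hj => by rw [Nat.le_zero.mp hj]; exact hv,
        fun j hj1 hj0 => absurd (hj1.trans hj0) (by omega)⟩
    | succ m ih =>
      intro v hv
      by_cases hvm : v ∈ reach m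
      · obtain ⟨k, hk, p, h⟩ := ih v hvm
        exact ⟨k, hk.trans (Nat.le_succ m), p, h⟩
      · have hv' : ∃ u ∈ reach m, Rel u v := by
          rw [reach_succ] at hv
          rcases hv with h | h
          · exact absurd h hvm
          · exact h
        obtain ⟨u, hu, hRuv⟩ := hv'
        obtain ⟨k, hk, p, hpk, h0, harc, hin, hout⟩ := ih u hu
        refine ⟨k+1, by omega, fun j => if j ≤ k then p j else v, ?_, ?_, ?_, ?_, ?_⟩
        · simp
        · simpa using h0
        · intro j hj
          by_cases hjk : j + 1 ≤ k
          · simpa [show j ≤ k by omega, hjk] using harc j (by omega)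
          · have hjek : j = k := by omega
            subst hjek
            simpa [hpk] using hRuv
        · intro j hj
          by_cases hjk : j ≤ k
          · simpa [hjk] using hin j hjk
          · have : j = k + 1 := by omega
            subst this
            have : v ∈ reach (k+1) := by
              rw [reach_succ]
              exact Or.inr ⟨u, by rw [← hpk]; exact hin k le_rfl, hRuv⟩
            simpa [hjk] using this
        · intro j hj1 hj2
          by_cases hjk : j ≤ k
          · simpa [hjk] using hout j hj1 hjk
          · have hje : j = k + 1 := by omega
            subst hje
            have hvk : v ∉ reach k := fun hmem => hvm (reach_mono k m hk hmem)
            simpa [hjk] using hvk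
  obtain ⟨b, hb, m, hbm⟩ := hreachable
  obtain ⟨k, hk, p, hpk, h0, harc, hin, hout⟩ := hpath m b hbm
  have hk1 : 1 ≤ k := by
    rcases Nat.eq_zero_or_pos k with h | h
    · subst h
      rw [hpk] at h0
      linarith
    · exact h
  have hinj : ∀ j, j ≤ k → ∀ j', j' ≤ k → p j = p j' → j = j' := by
    have key : ∀ j j', j < j' → j' ≤ k → p j ≠ p j' := by
      intro j j' hjj' hj'k heq
      have h1 : p j' ∉ reach (j'-1) := hout j' (by omega) hj'k
      have h2 : p j ∈ reach j := hin j (by omega)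
      have h3 : p j ∈ reach (j'-1) := reach_mono j (j'-1) (by omega) h2
      rw [heq] at h3
      exact h1 h3
    intro j hj j' hj' heq
    rcases lt_trichotomy j j' with h | h | h
    · exact absurd heq (key j j' h hj')
    · exact h
    · exact absurd heq.symm (key j' j h hj)
  have harc' : ∀ j, j < k → ∃ i, ∀ A, (∑ u ∈ A, z i u = F i A) → p (j+1) ∈ A → p j ∈ A := harc
  set bb : ℕ → Fin r := fun j => if h : j < k then (harc' j h).choose else ⟨0, hr⟩ with hbb
  refine ⟨k, hk1, p, bb, hinj, ?_, h0, by rw [hpk]; exact hb⟩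
  intro j hj
  have := (harc' j hj).choose_spec
  rw [hbb]
  simpa [hj] using this

/-- the ℓ₁ discrepancy of the block sums of `x` from those of `w` -/
def psiw (w x : Fin r → Fin n → ℝ) : ℝ := ∑ u, |∑ i, x i u - ∑ i, w i u|

lemma aug_step (hr : 0 < r) {F : Fin r → Finset (Fin n) → ℝ}
    (hsub : ∀ i, Submodular (F i)) {z w : Fin r → Fin n → ℝ}
    (hz : ∀ i, inB (F i) (z i)) (hw : ∀ i, inB (F i) (w i))
    (hne0 : ∃ u, ∑ i, z i u ≠ ∑ i, w i u) :
    ∃ x' : Fin r → Fin n → ℝ, (∀ i, inB (F i) (x' i)) ∧ ∃ α : ℝ, 0 < α ∧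
      psiw w x' = psiw w z - 2*α ∧ (∀ i u, |x' i u - z i u| ≤ α) ∧
      (∑ i, ∑ u, |x' i u - z i u| ≤ 2*((n:ℝ)-1)*α) := by
  classical
  obtain ⟨k, hk1, p, bb, hinj, harc, he0, hek⟩ := exists_augpath hr hsub hz hw hne0
  set c1 : Fin r → Fin n → ℝ :=
    fun i u => ∑ j ∈ Finset.range k, if bb j = i ∧ p (j+1) = u then (1:ℝ) else 0 with hc1
  set c2 : Fin r → Fin n → ℝ :=
    fun i u => ∑ j ∈ Finset.range k, if bb j = i ∧ p j = u then (1:ℝ) else 0 with hc2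
  set h : Fin r → Fin n → ℝ := fun i u => c1 i u - c2 i u with hh
  -- basic bounds on c1, c2
  have hc1nn : ∀ i u, 0 ≤ c1 i u := fun i u =>
    Finset.sum_nonneg fun j _ => by positivity
  have hc2nn : ∀ i u, 0 ≤ c2 i u := fun i u =>
    Finset.sum_nonneg fun j _ => by positivity
  have hc1le : ∀ i u, c1 i u ≤ 1 := by
    intro i u
    rw [hc1]
    simp only
    rw [Finset.sum_boole]
    have : (Finset.filter (fun j => bb j = i ∧ p (j+1) = u) (Finset.range k)).card ≤ 1 := by
      apply Finset.card_le_one.mpr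
      intro a ha b hb
      rw [Finset.mem_filter, Finset.mem_range] at ha hb
      have := hinj (a+1) (by omega) (b+1) (by omega) (by rw [ha.2.2, hb.2.2])
      omega
    exact_mod_cast this
  have hc2le : ∀ i u, c2 i u ≤ 1 := by
    intro i u
    rw [hc2]
    simp only
    rw [Finset.sum_boole]
    have : (Finset.filter (fun j => bb j = i ∧ p j = u) (Finset.range k)).card ≤ 1 := by
      apply Finset.card_le_one.mpr
      intro a ha b hb
      rw [Finset.mem_filter, Finset.mem_range] at ha hb
      have := hinj a (by omega) b (by omega) (by rw [ha.2.2, hb.2.2])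
      omega
    exact_mod_cast this
  -- inner sum computations
  have inner1 : ∀ i j (A : Finset (Fin n)),
      (∑ u ∈ A, if bb j = i ∧ p (j+1) = u then (1:ℝ) else 0)
        = if bb j = i ∧ p (j+1) ∈ A then 1 else 0 := by
    intro i j A
    by_cases hbj : bb j = i
    · simp only [hbj, true_and]
      exact Finset.sum_ite_eq A (p (j+1)) (fun _ => (1:ℝ))
    · simp [hbj]
  have inner2 : ∀ i j (A : Finset (Fin n)),
      (∑ u ∈ A, if bb j = i ∧ p j = u then (1:ℝ) else 0)
        = if bb j = i ∧ p j ∈ A then 1 else 0 := by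
    intro i j A
    by_cases hbj : bb j = i
    · simp only [hbj, true_and]
      exact Finset.sum_ite_eq A (p j) (fun _ => (1:ℝ))
    · simp [hbj]
  -- (f2) each block direction sums to zero
  have hf2 : ∀ i, ∑ u, h i u = 0 := by
    intro i
    rw [hh]
    simp only
    rw [Finset.sum_sub_distrib]
    rw [hc1, hc2]
    simp only
    rw [Finset.sum_comm, Finset.sum_comm (s := Finset.univ)]
    have e1 : ∀ j, (∑ u, if bb j = i ∧ p (j+1) = u then (1:ℝ) else 0)
        = if bb j = i then 1 else 0 := by
      intro j
      rw [inner1 i j Finset.univ]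
      simp
    have e2 : ∀ j, (∑ u, if bb j = i ∧ p j = u then (1:ℝ) else 0)
        = if bb j = i then 1 else 0 := by
      intro j
      rw [inner2 i j Finset.univ]
      simp
    rw [Finset.sum_congr rfl fun j _ => e1 j, Finset.sum_congr rfl fun j _ => e2 j]
    ring
  -- (f3) tight sets only decrease
  have hf3 : ∀ i (A : Finset (Fin n)), (∑ u ∈ A, z i u = F i A) → ∑ u ∈ A, h i u ≤ 0 := by
    intro i A hA
    rw [hh]
    simp only
    rw [Finset.sum_sub_distrib, hc1, hc2]
    simp only
    rw [Finset.sum_comm, Finset.sum_comm (s := A)]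
    rw [Finset.sum_congr rfl fun j _ => inner1 i j A,
        Finset.sum_congr rfl fun j _ => inner2 i j A]
    rw [← Finset.sum_sub_distrib]
    apply Finset.sum_nonpos
    intro j hj
    rw [Finset.mem_range] at hj
    by_cases h1 : bb j = i ∧ p (j+1) ∈ A
    · have hpj : p j ∈ A := by
        apply harc j hj A _ h1.2
        rw [h1.1]
        exact hA
      simp [h1, h1.1, hpj]
    · simp only [h1, if_false]
      have : (0:ℝ) ≤ if bb j = i ∧ p j ∈ A then (1:ℝ) else 0 := by positivity
      linarith
  -- (f4) telescoping of the total direction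
  have hf4 : ∀ u, ∑ i, h i u
      = (if p k = u then (1:ℝ) else 0) - (if p 0 = u then 1 else 0) := by
    intro u
    rw [hh]
    simp only
    rw [Finset.sum_sub_distrib, hc1, hc2]
    simp only
    rw [Finset.sum_comm, Finset.sum_comm (s := Finset.univ) (t := Finset.range k)]
    have e1 : ∀ j, (∑ i, if bb j = i ∧ p (j+1) = u then (1:ℝ) else 0)
        = if p (j+1) = u then 1 else 0 := by
      intro j
      by_cases hpj : p (j+1) = u
      · simp only [hpj, and_true]
        rw [Finset.sum_ite_eq Finset.univ (bb j) (fun _ => (1:ℝ))]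
        simp
      · simp [hpj]
    have e2 : ∀ j, (∑ i, if bb j = i ∧ p j = u then (1:ℝ) else 0)
        = if p j = u then 1 else 0 := by
      intro j
      by_cases hpj : p j = u
      · simp only [hpj, and_true]
        rw [Finset.sum_ite_eq Finset.univ (bb j) (fun _ => (1:ℝ))]
        simp
      · simp [hpj]
    rw [Finset.sum_congr rfl fun j _ => e1 j, Finset.sum_congr rfl fun j _ => e2 j]
    rw [← Finset.sum_sub_distrib]
    exact Finset.sum_range_sub (fun m => if p m = u then (1:ℝ) else 0) k
  -- (f5) total ℓ₁ mass of the direction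
  have hf5 : ∑ i, ∑ u, |h i u| ≤ 2 * k := by
    have hb : ∀ i u, |h i u| ≤ c1 i u + c2 i u := by
      intro i u
      rw [hh]
      simp only
      rw [abs_le]
      constructor
      · have := hc1nn i u; have := hc2nn i u; linarith [hc1le i u, hc2le i u]
      · have := hc1nn i u; have := hc2nn i u; linarith [hc1le i u, hc2le i u]
    calc ∑ i, ∑ u, |h i u| ≤ ∑ i, ∑ u, (c1 i u + c2 i u) := by
          apply Finset.sum_le_sum; intro i _
          apply Finset.sum_le_sum; intro u _
          exact hb i u
      _ = (∑ i, ∑ u, c1 i u) + (∑ i, ∑ u, c2 i u) := by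
          rw [← Finset.sum_add_distrib]
          apply Finset.sum_congr rfl; intro i _
          rw [← Finset.sum_add_distrib]
      _ = (k : ℝ) + (k : ℝ) := by
          have step2 : ∀ j : ℕ, (∑ i, if bb j = i then (1:ℝ) else 0) = 1 := by
            intro j
            rw [Finset.sum_ite_eq Finset.univ (bb j) (fun _ => (1:ℝ))]
            simp
          have ec1 : (∑ i, ∑ u, c1 i u) = (k:ℝ) := by
            have step1 : ∀ i : Fin r, ∑ u, c1 i u
                = ∑ j ∈ Finset.range k, if bb j = i then (1:ℝ) else 0 := by
              intro i
              rw [hc1]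
              simp only
              rw [Finset.sum_comm]
              refine Finset.sum_congr rfl fun j _ => ?_
              rw [inner1 i j Finset.univ]
              simp
            rw [Finset.sum_congr rfl fun i _ => step1 i, Finset.sum_comm,
              Finset.sum_congr rfl fun j _ => step2 j]
            simp
          have ec2 : (∑ i, ∑ u, c2 i u) = (k:ℝ) := by
            have step1 : ∀ i : Fin r, ∑ u, c2 i u
                = ∑ j ∈ Finset.range k, if bb j = i then (1:ℝ) else 0 := by
              intro i
              rw [hc2]
              simp only
              rw [Finset.sum_comm]
              refine Finset.sum_congr rfl fun j _ => ?_
              rw [inner2 i j Finset.univ]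
              simp
            rw [Finset.sum_congr rfl fun i _ => step1 i, Finset.sum_comm,
              Finset.sum_congr rfl fun j _ => step2 j]
            simp
          rw [ec1, ec2]
      _ = 2 * k := by ring
  -- (f6) coordinatewise bound
  have hf6 : ∀ i u, |h i u| ≤ 1 := by
    intro i u
    rw [hh]
    simp only
    rw [abs_le]
    constructor
    · have := hc1nn i u; linarith [hc2le i u]
    · have := hc2nn i u; linarith [hc1le i u]
  -- (f7) path length bound
  have hf7 : k + 1 ≤ n := by
    have hinj' : Function.Injective (fun j : Fin (k+1) => p j.val) := by
      intro a b hab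
      have := hinj a.val (by omega) b.val (by omega) hab
      exact Fin.ext this
    have := Fintype.card_le_of_injective _ hinj'
    simpa using this
  -- feasibility of the move
  choose ε hε using fun i => move_feasible (hz i) (hf2 i) (hf3 i)
  have hFinr : (Finset.univ : Finset (Fin r)).Nonempty := ⟨⟨0, hr⟩, Finset.mem_univ _⟩
  set εmin : ℝ := Finset.univ.inf' hFinr ε with hεmin
  have hεminpos : 0 < εmin := by
    rw [hεmin, Finset.lt_inf'_iff]
    exact fun i _ => (hε i).1
  set e0 : ℝ := (∑ i, z i (p 0)) - (∑ i, w i (p 0)) with he0def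
  set ek : ℝ := (∑ i, w i (p k)) - (∑ i, z i (p k)) with hekdef
  have he0pos : 0 < e0 := by rw [he0def]; linarith
  have hekpos : 0 < ek := by rw [hekdef]; linarith
  set α : ℝ := min εmin (min e0 ek) with hα
  have hαpos : 0 < α := by
    rw [hα]
    exact lt_min hεminpos (lt_min he0pos hekpos)
  have hαε : ∀ i, α ≤ ε i := fun i =>
    le_trans (min_le_left _ _) (Finset.inf'_le ε (Finset.mem_univ i))
  have hαe0 : α ≤ e0 := le_trans (min_le_right _ _) (min_le_left _ _)
  have hαek : α ≤ ek := le_trans (min_le_right _ _) (min_le_right _ _)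
  set x' : Fin r → Fin n → ℝ := fun i u => z i u + α * h i u with hx'
  have hfeas : ∀ i, inB (F i) (x' i) := fun i =>
    (hε i).2 α (le_of_lt hαpos) (hαε i)
  have hp0k : p 0 ≠ p k := by
    intro hcon
    have := hinj 0 (by omega) k le_rfl hcon
    omega
  -- the sum of blocks of x'
  have hSx' : ∀ u, ∑ i, x' i u = (∑ i, z i u)
      + α * ((if p k = u then (1:ℝ) else 0) - (if p 0 = u then 1 else 0)) := by
    intro u
    rw [hx']
    simp only
    rw [Finset.sum_add_distrib, ← Finset.mul_sum, hf4 u]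
  -- pointwise discrepancy change
  have hpt : ∀ u, |∑ i, x' i u - ∑ i, w i u|
      = |∑ i, z i u - ∑ i, w i u|
        - ((if p 0 = u then α else 0) + (if p k = u then α else 0)) := by
    intro u
    rw [hSx' u]
    by_cases h0 : p 0 = u
    · subst h0
      have hkne : ¬ (p k = p 0) := fun hc => hp0k hc.symm
      have lhs : (∑ i, z i (p 0))
          + α * ((if p k = p 0 then (1:ℝ) else 0) - (if p 0 = p 0 then 1 else 0))
          - ∑ i, w i (p 0) = e0 - α := by
        rw [if_neg hkne, if_pos rfl, he0def]; ring
      rw [lhs, if_pos rfl, if_neg hkne]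
      rw [abs_of_nonneg (by linarith : (0:ℝ) ≤ e0 - α)]
      have habs : |∑ i, z i (p 0) - ∑ i, w i (p 0)| = e0 := by
        rw [← he0def]; exact abs_of_pos he0pos
      rw [habs]; ring
    · by_cases hk' : p k = u
      · subst hk'
        have lhs : (∑ i, z i (p k))
            + α * ((if p k = p k then (1:ℝ) else 0) - (if p 0 = p k then 1 else 0))
            - ∑ i, w i (p k) = -(ek - α) := by
          rw [if_pos rfl, if_neg h0, hekdef]; ring
        rw [lhs, abs_neg, if_neg h0, if_pos rfl]
        rw [abs_of_nonneg (by linarith : (0:ℝ) ≤ ek - α)]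
        have habs : |∑ i, z i (p k) - ∑ i, w i (p k)| = ek := by
          have : ∑ i, z i (p k) - ∑ i, w i (p k) = -ek := by rw [hekdef]; ring
          rw [this, abs_neg]
          exact abs_of_pos hekpos
        rw [habs]; ring
      · have lhs : (∑ i, z i u)
            + α * ((if p k = u then (1:ℝ) else 0) - (if p 0 = u then 1 else 0))
            - ∑ i, w i u = ∑ i, z i u - ∑ i, w i u := by
          rw [if_neg hk', if_neg h0]; ring
        rw [lhs, if_neg h0, if_neg hk']; ring
  have hψ' : psiw w x' = psiw w z - 2*α := by
    rw [psiw, psiw]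
    rw [Finset.sum_congr rfl fun u _ => hpt u]
    rw [Finset.sum_sub_distrib, Finset.sum_add_distrib]
    rw [Finset.sum_ite_eq Finset.univ (p 0) (fun _ => α),
        Finset.sum_ite_eq Finset.univ (p k) (fun _ => α)]
    simp only [Finset.mem_univ, if_true]
    ring
  have hcoord : ∀ i u, |x' i u - z i u| ≤ α := by
    intro i u
    rw [hx']
    simp only [add_sub_cancel_left]
    rw [abs_mul, abs_of_pos hαpos]
    have := hf6 i u
    nlinarith
  have hL1 : ∑ i, ∑ u, |x' i u - z i u| ≤ 2*((n:ℝ)-1)*α := by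
    have e1 : ∀ i u, |x' i u - z i u| = α * |h i u| := by
      intro i u
      rw [hx']
      simp only [add_sub_cancel_left]
      rw [abs_mul, abs_of_pos hαpos]
    calc ∑ i, ∑ u, |x' i u - z i u| = α * ∑ i, ∑ u, |h i u| := by
          rw [Finset.mul_sum]
          apply Finset.sum_congr rfl
          intro i _
          rw [Finset.mul_sum]
          exact Finset.sum_congr rfl fun u _ => e1 i u
      _ ≤ α * (2 * k) := by
          apply mul_le_mul_of_nonneg_left hf5 (le_of_lt hαpos)
      _ ≤ 2*((n:ℝ)-1)*α := by
          have hkn : (k:ℝ) ≤ (n:ℝ) - 1 := by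
            have : (k:ℝ) + 1 ≤ (n:ℝ) := by exact_mod_cast hf7
            linarith
          nlinarith [le_of_lt hαpos]
  exact ⟨x', hfeas, α, hαpos, hψ', hcoord, hL1⟩


lemma main_exists (hr : 0 < r) {F : Fin r → Finset (Fin n) → ℝ}
    (hsub : ∀ i, Submodular (F i))
    (yP w : Fin r → Fin n → ℝ) (hy : ∀ i, inB (F i) (yP i)) (hw : ∀ i, inB (F i) (w i)) :
    ∃ zP : Fin r → Fin n → ℝ, (∀ i, inB (F i) (zP i)) ∧
      (∀ u, ∑ i, zP i u = ∑ i, w i u) ∧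
      (∀ i u, |zP i u - yP i u| ≤ (psiw w yP) / 2) ∧
      (∑ i, ∑ u, |zP i u - yP i u| ≤ n * psiw w yP) := by
  classical
  set D1 : ℝ := psiw w yP with hD1
  have hψnn : ∀ x : Fin r → Fin n → ℝ, 0 ≤ psiw w x := fun x =>
    Finset.sum_nonneg fun u _ => abs_nonneg _
  set K1 : Set (Fin r → Fin n → ℝ) := {x | ∀ i, inB (F i) (x i)} with hK1def
  set K2 : Set (Fin r → Fin n → ℝ) :=
    {x | (n:ℝ) * psiw w x + (∑ i, ∑ u, |x i u - yP i u|) ≤ n * D1} with hK2def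
  set K3 : Set (Fin r → Fin n → ℝ) :=
    {x | ∀ i u, |x i u - yP i u| ≤ (D1 - psiw w x)/2} with hK3def
  set K : Set (Fin r → Fin n → ℝ) := K1 ∩ (K2 ∩ K3) with hKdef
  have hcont_coord : ∀ (i : Fin r) (u : Fin n),
      Continuous fun x : Fin r → Fin n → ℝ => x i u :=
    fun i u => (continuous_apply u).comp (continuous_apply i)
  have hcontψ : Continuous (psiw w) := by
    unfold psiw
    exact continuous_finset_sum _ fun u _ =>
      (Continuous.sub (continuous_finset_sum _ fun i _ => hcont_coord i u) continuous_const).abs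
  have hcontL1 : Continuous fun x : Fin r → Fin n → ℝ => ∑ i, ∑ u, |x i u - yP i u| :=
    continuous_finset_sum _ fun i _ => continuous_finset_sum _ fun u _ =>
      ((hcont_coord i u).sub continuous_const).abs
  have hK1closed : IsClosed K1 := by
    have he : K1 = ⋂ i, ((⋂ A : Finset (Fin n),
        {x : Fin r → Fin n → ℝ | ∑ u ∈ A, x i u ≤ F i A})
        ∩ {x : Fin r → Fin n → ℝ | ∑ u, x i u = F i Finset.univ}) := by
      ext x
      constructor
      · intro hx
        simp only [Set.mem_iInter, Set.mem_inter_iff, Set.mem_setOf_eq]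
        exact fun i => ⟨fun A => (hx i).1 A, (hx i).2⟩
      · intro hx
        simp only [Set.mem_iInter, Set.mem_inter_iff, Set.mem_setOf_eq] at hx
        exact fun i => ⟨fun A => (hx i).1 A, (hx i).2⟩
    rw [he]
    refine isClosed_iInter fun i => IsClosed.inter
      (isClosed_iInter fun A => isClosed_le
        (continuous_finset_sum _ fun u _ => hcont_coord i u) continuous_const)
      (isClosed_eq (continuous_finset_sum _ fun u _ => hcont_coord i u) continuous_const)
  have hK2closed : IsClosed K2 :=
    isClosed_le ((continuous_const.mul hcontψ).add hcontL1) continuous_const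
  have hK3closed : IsClosed K3 := by
    have he : K3 = ⋂ i, ⋂ u,
        {x : Fin r → Fin n → ℝ | |x i u - yP i u| ≤ (D1 - psiw w x)/2} := by
      ext x
      simp only [hK3def, Set.mem_setOf_eq, Set.mem_iInter]
    rw [he]
    exact isClosed_iInter fun i => isClosed_iInter fun u =>
      isClosed_le ((hcont_coord i u).sub continuous_const).abs
        ((continuous_const.sub hcontψ).div_const 2)
  have hKclosed : IsClosed K := hK1closed.inter (hK2closed.inter hK3closed)
  have hbox : IsCompact (Set.univ.pi fun i : Fin r => Set.univ.pi fun u : Fin n =>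
      Set.Icc (yP i u - D1/2) (yP i u + D1/2)) :=
    isCompact_univ_pi fun i => isCompact_univ_pi fun u => isCompact_Icc
  have hKsubbox : K ⊆ Set.univ.pi fun i : Fin r => Set.univ.pi fun u : Fin n =>
      Set.Icc (yP i u - D1/2) (yP i u + D1/2) := by
    intro x hx
    rw [Set.mem_univ_pi]
    intro i
    rw [Set.mem_univ_pi]
    intro u
    have h3 := hx.2.2 i u
    have hψ := hψnn x
    have habs : |x i u - yP i u| ≤ D1/2 := le_trans h3 (by linarith)
    rw [abs_le] at habs
    rw [Set.mem_Icc]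
    constructor <;> linarith [habs.1, habs.2]
  have hKcpt : IsCompact K := hbox.of_isClosed_subset hKclosed hKsubbox
  have hyK : yP ∈ K := by
    refine ⟨hy, ?_, ?_⟩
    · show (n:ℝ) * psiw w yP + (∑ i, ∑ u, |yP i u - yP i u|) ≤ n * D1
      rw [← hD1]
      simp
    · intro i u
      rw [← hD1]
      simp
  obtain ⟨z, hzK, hzmin⟩ := hKcpt.exists_isMinOn ⟨yP, hyK⟩ hcontψ.continuousOn
  have hzK1 : ∀ i, inB (F i) (z i) := hzK.1
  have hzK2 : (n:ℝ) * psiw w z + (∑ i, ∑ u, |z i u - yP i u|) ≤ n * D1 := hzK.2.1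
  have hzK3 : ∀ i u, |z i u - yP i u| ≤ (D1 - psiw w z)/2 := hzK.2.2
  have hψz : psiw w z = 0 := by
    by_contra hne
    have hpos : 0 < psiw w z := lt_of_le_of_ne (hψnn z) (Ne.symm hne)
    have hne0 : ∃ u, ∑ i, z i u ≠ ∑ i, w i u := by
      by_contra hc
      push_neg at hc
      have : psiw w z = 0 := by
        unfold psiw
        apply Finset.sum_eq_zero
        intro u _
        rw [hc u]
        simp
      exact hne this
    obtain ⟨x', hx'feas, α, hαpos, hψ', hcoord, hL1'⟩ := aug_step hr hsub hzK1 hw hne0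
    have htri : ∑ i, ∑ u, |x' i u - yP i u|
        ≤ (∑ i, ∑ u, |z i u - yP i u|) + ∑ i, ∑ u, |x' i u - z i u| := by
      calc ∑ i, ∑ u, |x' i u - yP i u|
          ≤ ∑ i, ∑ u, (|z i u - yP i u| + |x' i u - z i u|) := by
            refine Finset.sum_le_sum fun i _ => Finset.sum_le_sum fun u _ => ?_
            have he : x' i u - yP i u = (z i u - yP i u) + (x' i u - z i u) := by ring
            rw [he]
            rw [add_comm (|z i u - yP i u|)]
            rw [add_comm (z i u - yP i u)]
            exact abs_add_le _ _
        _ = (∑ i, ∑ u, |z i u - yP i u|) + ∑ i, ∑ u, |x' i u - z i u| := by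
            rw [← Finset.sum_add_distrib]
            exact Finset.sum_congr rfl fun i _ => by rw [← Finset.sum_add_distrib]
    have hx'K : x' ∈ K := by
      refine ⟨hx'feas, ?_, ?_⟩
      · show (n:ℝ) * psiw w x' + (∑ i, ∑ u, |x' i u - yP i u|) ≤ n * D1
        rw [hψ']
        have e1 : (n:ℝ) * (psiw w z - 2*α) = n * psiw w z - 2*((n:ℝ)*α) := by ring
        have e2 : 2*((n:ℝ)-1)*α = 2*((n:ℝ)*α) - 2*α := by ring
        rw [e1]
        rw [e2] at hL1'
        linarith
      · intro i u
        show |x' i u - yP i u| ≤ (D1 - psiw w x')/2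
        rw [hψ']
        have h3 := hzK3 i u
        have hc := hcoord i u
        have htr : |x' i u - yP i u| ≤ |z i u - yP i u| + |x' i u - z i u| := by
          have he : x' i u - yP i u = (z i u - yP i u) + (x' i u - z i u) := by ring
          rw [he]
          exact abs_add_le _ _
        linarith
    have hge : psiw w z ≤ psiw w x' := isMinOn_iff.mp hzmin x' hx'K
    rw [hψ'] at hge
    linarith
  refine ⟨z, hzK1, ?_, ?_, ?_⟩
  · intro u
    have hz0 : ∀ u ∈ Finset.univ, |∑ i, z i u - ∑ i, w i u| = (0:ℝ) := by
      have := hψz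
      unfold psiw at this
      exact (Finset.sum_eq_zero_iff_of_nonneg (fun u _ => abs_nonneg _)).mp this
    have := hz0 u (Finset.mem_univ u)
    rw [abs_eq_zero, sub_eq_zero] at this
    exact this
  · intro i u
    have := hzK3 i u
    rw [hψz] at this
    linarith
  · have := hzK2
    rw [hψz] at this
    linarith


end Prox

/-- If `y ∈ 𝒴` is feasible for (Prox-DSM) and `y*` is an optimal solution
closest to `y`, then `‖S(y - y*)‖ ≥ (1/(nr)) ‖y - y*‖`. -/
theorem statement1 (n r : ℕ) (hn : 1 ≤ n) (hr : 1 ≤ r)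
    (F : Fin r → Finset (Fin n) → ℝ)
    (hsub : ∀ i, Submodular (F i)) (hnorm : ∀ i, F i ∅ = 0)
    (y ystar : Vec n r) (hy : y ∈ feas n r F)
    (hopt : IsOptimal n r F ystar)
    (hclosest : ∀ z : Vec n r, IsOptimal n r F z → ‖y - ystar‖ ≤ ‖y - z‖) :
    ‖Smap n r (y - ystar)‖ ≥ (1 / ((n : ℝ) * r)) * ‖y - ystar‖ := by
  classical
  have hr0 : 0 < r := hr
  set yP : Fin r → Fin n → ℝ := fun i u => y i u with hyPdef
  set wP : Fin r → Fin n → ℝ := fun i u => ystar i u with hwPdef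
  have hyF : ∀ i, Prox.inB (F i) (yP i) := fun i => hy i
  have hwF : ∀ i, Prox.inB (F i) (wP i) := fun i => hopt.1 i
  obtain ⟨zP, hzfeas, hzsum, hzcoord, hzL1⟩ := Prox.main_exists hr0 hsub yP wP hyF hwF
  set zV : Vec n r := WithLp.toLp 2 (fun i => WithLp.toLp 2 (zP i)) with hzVdef
  have hsumz : (∑ i, zV i) = (∑ i, ystar i) := by
    ext u
    have e1 : (∑ i, zV i) u = ∑ i, zV i u := by
      rw [WithLp.ofLp_sum]; exact Finset.sum_apply u Finset.univ fun i => zV i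
    have e2 : (∑ i, ystar i) u = ∑ i, ystar i u :=
      by rw [WithLp.ofLp_sum]; exact Finset.sum_apply u Finset.univ fun i => ystar i
    rw [e1, e2]
    exact hzsum u
  have hzfeasV : zV ∈ feas n r F := fun i => hzfeas i
  have hgz : g n r zV = g n r ystar := by unfold g; rw [hsumz]
  have hoptz : IsOptimal n r F zV := ⟨hzfeasV, fun z' hz' => by rw [hgz]; exact hopt.2 z' hz'⟩
  have hle : ‖y - ystar‖ ≤ ‖y - zV‖ := hclosest zV hoptz
  set D1 : ℝ := Prox.psiw wP yP with hD1def
  have hD1expand : D1 = ∑ u, |∑ i, yP i u - ∑ i, wP i u| := rfl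
  have hD1nn : 0 ≤ D1 := by
    rw [hD1expand]
    exact Finset.sum_nonneg fun u _ => abs_nonneg _
  set SD : ℝ := ∑ u, (∑ i, yP i u - ∑ i, wP i u)^2 with hSDdef
  have hSDnn : 0 ≤ SD := by
    rw [hSDdef]
    exact Finset.sum_nonneg fun u _ => sq_nonneg _
  have hyz2 : ‖y - zV‖^2 ≤ (n:ℝ) * D1^2 := by
    have hexp : ‖y - zV‖^2 = ∑ i, ∑ u, (y i u - zP i u)^2 := by
      rw [PiLp.norm_sq_eq_of_L2]
      refine Finset.sum_congr rfl fun i _ => ?_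
      rw [EuclideanSpace.norm_eq, Real.sq_sqrt (by positivity)]
      refine Finset.sum_congr rfl fun u _ => ?_
      have hsubm : (y - zV) i u = y i u - zP i u := by rw [PiLp.sub_apply, PiLp.sub_apply]
      rw [Real.norm_eq_abs, sq_abs, hsubm]
    rw [hexp]
    have hstep : ∀ i u, (y i u - zP i u)^2 ≤ (D1/2) * |zP i u - yP i u| := by
      intro i u
      have h1 : |y i u - zP i u| = |zP i u - yP i u| := by
        rw [abs_sub_comm]
      have h2 := hzcoord i u
      calc (y i u - zP i u)^2 = |y i u - zP i u| * |y i u - zP i u| := by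
            rw [sq, ← abs_mul_abs_self]
        _ = |zP i u - yP i u| * |zP i u - yP i u| := by rw [h1]
        _ ≤ (D1/2) * |zP i u - yP i u| := mul_le_mul_of_nonneg_right h2 (abs_nonneg _)
    have hn0 : (0:ℝ) ≤ (n:ℝ) := Nat.cast_nonneg n
    calc ∑ i, ∑ u, (y i u - zP i u)^2
        ≤ ∑ i, ∑ u, (D1/2) * |zP i u - yP i u| :=
          Finset.sum_le_sum fun i _ => Finset.sum_le_sum fun u _ => hstep i u
      _ = (D1/2) * ∑ i, ∑ u, |zP i u - yP i u| := by
          rw [Finset.mul_sum]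
          exact Finset.sum_congr rfl fun i _ => by rw [Finset.mul_sum]
      _ ≤ (D1/2) * ((n:ℝ) * D1) :=
          mul_le_mul_of_nonneg_left hzL1 (by positivity)
      _ = (n:ℝ) * D1^2 / 2 := by ring
      _ ≤ (n:ℝ) * D1^2 := by
          have hq : (0:ℝ) ≤ (n:ℝ) * D1^2 := by positivity
          linarith
  have hCS : D1^2 ≤ (n:ℝ) * SD := by
    have hcs := Finset.sum_mul_sq_le_sq_mul_sq Finset.univ (fun _ : Fin n => (1:ℝ))
      (fun u => |∑ i, yP i u - ∑ i, wP i u|)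
    have e1 : (∑ u, (1:ℝ) * |∑ i, yP i u - ∑ i, wP i u|) = D1 := by
      rw [hD1expand]
      exact Finset.sum_congr rfl fun u _ => one_mul _
    have e2 : (∑ _u : Fin n, ((1:ℝ))^2) = (n:ℝ) := by simp
    have e3 : (∑ u, |∑ i, yP i u - ∑ i, wP i u|^2) = SD := by
      rw [hSDdef]
      exact Finset.sum_congr rfl fun u _ => sq_abs _
    rw [e1, e2, e3] at hcs
    exact hcs
  have hs2 : ‖Smap n r (y - ystar)‖^2 = SD / r := by
    unfold Smap
    rw [norm_smul, Real.norm_eq_abs, abs_of_nonneg (by positivity), mul_pow, inv_pow,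
      Real.sq_sqrt (by positivity : (0:ℝ) ≤ (r:ℝ))]
    have h2 : ‖∑ i, (y - ystar) i‖^2 = SD := by
      rw [EuclideanSpace.norm_eq, Real.sq_sqrt (by positivity), hSDdef]
      refine Finset.sum_congr rfl fun u _ => ?_
      rw [Real.norm_eq_abs, sq_abs]
      congr 1
      have e1 : (∑ i, (y - ystar) i) u = ∑ i, (y - ystar) i u :=
        by rw [WithLp.ofLp_sum]; exact Finset.sum_apply u Finset.univ fun i => (y - ystar) i
      rw [e1, ← Finset.sum_sub_distrib]
      exact Finset.sum_congr rfl fun i _ => by rw [PiLp.sub_apply, PiLp.sub_apply]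
    rw [h2, inv_mul_eq_div]
  have hn0 : (0:ℝ) ≤ (n:ℝ) := Nat.cast_nonneg n
  have hr1 : (1:ℝ) ≤ (r:ℝ) := by exact_mod_cast hr
  have hchain : ‖y - ystar‖^2 ≤ (((n:ℝ)*r) * ‖Smap n r (y - ystar)‖)^2 := by
    have h1 : ‖y - ystar‖^2 ≤ ‖y - zV‖^2 := pow_le_pow_left₀ (norm_nonneg _) hle 2
    have h4 : (((n:ℝ)*r) * ‖Smap n r (y - ystar)‖)^2 = (n:ℝ)^2 * (r:ℝ) * SD := by
      rw [mul_pow, hs2]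
      have hrne : (r:ℝ) ≠ 0 := by linarith
      field_simp
    rw [h4]
    calc ‖y - ystar‖^2 ≤ (n:ℝ) * D1^2 := le_trans h1 hyz2
      _ ≤ (n:ℝ) * ((n:ℝ) * SD) := mul_le_mul_of_nonneg_left hCS hn0
      _ = (n:ℝ)^2 * SD := by ring
      _ = (n:ℝ)^2 * SD * 1 := by ring
      _ ≤ (n:ℝ)^2 * SD * r := by
          apply mul_le_mul_of_nonneg_left hr1
          positivity
      _ = (n:ℝ)^2 * (r:ℝ) * SD := by ring
  have hSnn : (0:ℝ) ≤ ((n:ℝ)*r) * ‖Smap n r (y - ystar)‖ := by positivity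
  have hfin : ‖y - ystar‖ ≤ ((n:ℝ)*r) * ‖Smap n r (y - ystar)‖ := by
    have hsq := Real.sqrt_le_sqrt hchain
    rwa [Real.sqrt_sq (norm_nonneg _), Real.sqrt_sq hSnn] at hsq
  have hn1 : (1:ℝ) ≤ (n:ℝ) := by exact_mod_cast hn
  have hnrpos : (0:ℝ) < (n:ℝ)*r :=
    mul_pos (lt_of_lt_of_le one_pos hn1) (lt_of_lt_of_le one_pos hr1)
  have hnrne : ((n:ℝ)*r) ≠ 0 := ne_of_gt hnrpos
  rw [ge_iff_le]
  calc 1/((n:ℝ)*r) * ‖y - ystar‖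
      ≤ 1/((n:ℝ)*r) * (((n:ℝ)*r) * ‖Smap n r (y - ystar)‖) := by
        apply mul_le_mul_of_nonneg_left hfin
        positivity
    _ = ‖Smap n r (y - ystar)‖ := by
        field_simp
end
end

section
/- Fix a starting point y₀ ∈ 𝒴. For an index sequence (i₀, i₁, …) with each iₖ ∈ {1,…,r}, define iterates by: y_{k+1} agrees with y_k in every block except block i_k, and y_{k+1}^{(i_k)} is the unique minimizer over z ∈ B(F_{i_k}) of ⟨∇_{i_k} g(y_k), z − y_k^{(i_k)}⟩ + ‖z − y_k^{(i_k)}‖². Then for every k ≥ 0, the average over all index sequences (i₀,…,i_k) ∈ {1,…,r}^{k+1} (each with weight r^{−(k+1)}) of d(y_{k+1}, E)² + g(y_{k+1}) − g* is at most (1 − 2/(n²r² + r))^{k+1} · ( d(y₀, E)² + g(y₀) − g* ). -/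
open scoped RealInnerProductSpace Pointwise

noncomputable section

/-- The RCDM iterate after applying the block updates indexed by `s 0, s 1, …, s (k-1)`
(in this order), where `T y i` is the vector obtained from `y` by replacing block `i`
with the block minimizer. -/
def rcdmIter (n r : ℕ) (T : Vec n r → Fin r → Vec n r) (y0 : Vec n r) :
    (k : ℕ) → (Fin k → Fin r) → Vec n r
  | 0, _ => y0
  | k + 1, s => T (rcdmIter n r T y0 k (fun j => s j.castSucc)) (s (Fin.last k))

set_option maxHeartbeats 1600000

namespace S3

variable {n : ℕ}

lemma euc_sum_apply {ι : Type*} (s : Finset ι) (y : ι → EuclideanSpace ℝ (Fin n)) (e : Fin n) :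
    (∑ i ∈ s, y i) e = ∑ i ∈ s, y i e := by
  classical
  induction s using Finset.induction with
  | empty => rfl
  | insert a s h ih => rw [Finset.sum_insert h, Finset.sum_insert h, ← ih]; rfl

def TightSet (F : Finset (Fin n) → ℝ) (w : EuclideanSpace ℝ (Fin n)) (A : Finset (Fin n)) : Prop :=
  (∑ i ∈ A, w i) = F A

lemma tight_inter_union {F : Finset (Fin n) → ℝ} (hF : Submodular F)
    {w : EuclideanSpace ℝ (Fin n)} (hw : w ∈ basePolytope n F)
    {A B : Finset (Fin n)} (hA : TightSet F w A) (hB : TightSet F w B) :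
    TightSet F w (A ∩ B) ∧ TightSet F w (A ∪ B) := by
  classical
  have h1 := hw.1 (A ∩ B)
  have h2 := hw.1 (A ∪ B)
  have h3 := hF A B
  have h4 : (∑ i ∈ A ∪ B, w i) + (∑ i ∈ A ∩ B, w i) = (∑ i ∈ A, w i) + (∑ i ∈ B, w i) :=
    Finset.sum_union_inter
  unfold TightSet at *
  constructor <;> linarith

lemma tight_inf' {F : Finset (Fin n) → ℝ} (hF : Submodular F)
    {w : EuclideanSpace ℝ (Fin n)} (hw : w ∈ basePolytope n F)
    {γ : Type*} {s : Finset γ} (hs : s.Nonempty) (B : γ → Finset (Fin n))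
    (h : ∀ x ∈ s, TightSet F w (B x)) : TightSet F w (s.inf' hs B) := by
  classical
  induction hs using Finset.Nonempty.cons_induction with
  | singleton a => simpa using h a (by simp)
  | cons a s ha hs ih =>
      rw [Finset.inf'_cons hs, Finset.inf_eq_inter]
      exact (tight_inter_union hF hw (h a (by simp)) (ih (fun x hx => h x (by simp [hx])))).1

lemma tight_sup' {F : Finset (Fin n) → ℝ} (hF : Submodular F)
    {w : EuclideanSpace ℝ (Fin n)} (hw : w ∈ basePolytope n F)
    {γ : Type*} {s : Finset γ} (hs : s.Nonempty) (B : γ → Finset (Fin n))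
    (h : ∀ x ∈ s, TightSet F w (B x)) : TightSet F w (s.sup' hs B) := by
  classical
  induction hs using Finset.Nonempty.cons_induction with
  | singleton a => simpa using h a (by simp)
  | cons a s ha hs ih =>
      rw [Finset.sup'_cons hs, Finset.sup_eq_union]
      exact (tight_inter_union hF hw (h a (by simp)) (ih (fun x hx => h x (by simp [hx])))).2

lemma mem_inf' {γ : Type*} {s : Finset γ} (hs : s.Nonempty) (B : γ → Finset (Fin n)) (a : Fin n) :
    a ∈ s.inf' hs B ↔ ∀ x ∈ s, a ∈ B x := by
  classical
  induction hs using Finset.Nonempty.cons_induction with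
  | singleton x => simp
  | cons x s hx hs ih => simp [Finset.inf'_cons hs, ih]

lemma mem_sup' {γ : Type*} {s : Finset γ} (hs : s.Nonempty) (B : γ → Finset (Fin n)) (a : Fin n) :
    a ∈ s.sup' hs B ↔ ∃ x ∈ s, a ∈ B x := by
  classical
  induction hs using Finset.Nonempty.cons_induction with
  | singleton x => simp
  | cons x s hx hs ih => simp [Finset.sup'_cons hs, ih]

lemma exists_move {F : Finset (Fin n) → ℝ}
    {w : EuclideanSpace ℝ (Fin n)} (hw : w ∈ basePolytope n F)
    (d : Fin n → ℝ) (hd0 : (∑ i, d i) = 0)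
    (hdt : ∀ A : Finset (Fin n), TightSet F w A → (∑ i ∈ A, d i) ≤ 0) :
    ∃ ε > 0, ∀ t, 0 ≤ t → t ≤ ε →
      (show EuclideanSpace ℝ (Fin n) from WithLp.toLp 2 (fun i => w i + t * d i)) ∈ basePolytope n F := by
  classical
  set q : Finset (Fin n) → ℝ := fun A =>
    if 0 < ∑ i ∈ A, d i then (F A - ∑ i ∈ A, w i) / (∑ i ∈ A, d i) else 1 with hq
  have huniv : (Finset.univ : Finset (Finset (Fin n))).Nonempty := ⟨∅, Finset.mem_univ _⟩
  set ε := Finset.univ.inf' huniv q with hε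
  have hqpos : ∀ A, 0 < q A := by
    intro A
    by_cases h : 0 < ∑ i ∈ A, d i
    · have hnt : (∑ i ∈ A, w i) < F A := by
        rcases lt_or_eq_of_le (hw.1 A) with h' | h'
        · exact h'
        · exact absurd (hdt A h') (not_le.mpr h)
      simp only [hq, if_pos h]
      exact div_pos (by linarith) h
    · simp only [hq, if_neg h]; exact one_pos
  refine ⟨ε, (Finset.lt_inf'_iff huniv).mpr (fun A _ => hqpos A), ?_⟩
  intro t ht0 htε
  constructor
  · intro A
    show (∑ i ∈ A, (w i + t * d i)) ≤ F A
    rw [Finset.sum_add_distrib, ← Finset.mul_sum]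
    by_cases h : 0 < ∑ i ∈ A, d i
    · have h1 : t ≤ (F A - ∑ i ∈ A, w i) / (∑ i ∈ A, d i) := by
        calc t ≤ ε := htε
        _ ≤ q A := Finset.inf'_le q (Finset.mem_univ A)
        _ = _ := by simp [hq, if_pos h]
      have h2 := (le_div_iff₀ h).mp h1
      linarith
    · push_neg at h
      nlinarith [hw.1 A, mul_nonneg ht0 (neg_nonneg.mpr h)]
  · show (∑ i, (w i + t * d i)) = F Finset.univ
    rw [Finset.sum_add_distrib, ← Finset.mul_sum, hd0, mul_zero, add_zero]
    exact hw.2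


variable {r : ℕ}

def Blocked (Fi : Finset (Fin n) → ℝ) (v : EuclideanSpace ℝ (Fin n)) (e f : Fin n) : Prop :=
  ∃ A : Finset (Fin n), TightSet Fi v A ∧ f ∈ A ∧ e ∉ A

def Arc (F : Fin r → Finset (Fin n) → ℝ) (w : Vec n r) (e f : Fin n) : Prop :=
  ∃ i, ¬ Blocked (F i) (w i) e f

lemma reach_neg {F : Fin r → Finset (Fin n) → ℝ} (hsub : ∀ i, Submodular (F i))
    {w p : Vec n r} (hw : w ∈ feas n r F) (hp : p ∈ feas n r F)
    {e0 : Fin n} (he0 : 0 < (∑ i, w i) e0 - (∑ i, p i) e0) :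
    ∃ f, Relation.ReflTransGen (Arc F w) e0 f ∧ (∑ i, w i) f - (∑ i, p i) f < 0 := by
  classical
  by_contra hcon
  push_neg at hcon
  set res : Fin n → ℝ := fun e => (∑ i, w i) e - (∑ i, p i) e with hres
  set R : Finset (Fin n) := Finset.univ.filter (fun f => Relation.ReflTransGen (Arc F w) e0 f)
    with hR
  have he0R : e0 ∈ R := by
    rw [hR, Finset.mem_filter]
    exact ⟨Finset.mem_univ e0, Relation.ReflTransGen.refl⟩
  have hRpos : ∀ f ∈ R, 0 ≤ res f := by
    intro f hf
    rw [hR, Finset.mem_filter] at hf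
    exact hcon f hf.2
  have htot : ∑ e, res e = 0 := by
    have h1 : ∑ e, (∑ i, w i) e = ∑ i, F i Finset.univ := by
      rw [show (∑ e, (∑ i, w i) e) = ∑ e, ∑ i, w i e from
        Finset.sum_congr rfl (fun e _ => euc_sum_apply _ _ _), Finset.sum_comm]
      exact Finset.sum_congr rfl (fun i _ => (hw i).2)
    have h2 : ∑ e, (∑ i, p i) e = ∑ i, F i Finset.univ := by
      rw [show (∑ e, (∑ i, p i) e) = ∑ e, ∑ i, p i e from
        Finset.sum_congr rfl (fun e _ => euc_sum_apply _ _ _), Finset.sum_comm]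
      exact Finset.sum_congr rfl (fun i _ => (hp i).2)
    simp only [hres, Finset.sum_sub_distrib, h1, h2, sub_self]
  set Rc : Finset (Fin n) := Finset.univ \ R with hRc
  have hsplit : ∑ e ∈ Rc, res e + ∑ e ∈ R, res e = 0 := by
    rw [Finset.sum_sdiff (Finset.subset_univ R)]; exact htot
  have hRsum : 0 < ∑ e ∈ R, res e :=
    lt_of_lt_of_le he0 (Finset.single_le_sum hRpos he0R)
  have hRcne : Rc.Nonempty := by
    rcases Finset.eq_empty_or_nonempty Rc with h | h
    · exfalso
      have : ∑ e ∈ Rc, res e = 0 := by simp [h]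
      linarith
    · exact h
  have hRne : R.Nonempty := ⟨e0, he0R⟩
  have hblock : ∀ i (e f : Fin n), ∃ A : Finset (Fin n),
      e ∈ R → f ∈ Rc → TightSet (F i) (w i) A ∧ f ∈ A ∧ e ∉ A := by
    intro i e f
    by_cases h : e ∈ R ∧ f ∈ Rc
    · have harc : ¬ Arc F w e f := by
        intro harc
        have hfR : f ∈ R := by
          have he' := h.1
          rw [hR, Finset.mem_filter] at he' ⊢
          exact ⟨Finset.mem_univ f, Relation.ReflTransGen.tail he'.2 harc⟩
        have hf' := h.2
        rw [hRc, Finset.mem_sdiff] at hf'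
        exact hf'.2 hfR
      have hbl : Blocked (F i) (w i) e f := by
        by_contra hb; exact harc ⟨i, hb⟩
      obtain ⟨A, h1, h2, h3⟩ := hbl
      exact ⟨A, fun _ _ => ⟨h1, h2, h3⟩⟩
    · exact ⟨∅, fun he hf => absurd ⟨he, hf⟩ h⟩
  choose A hA using hblock
  have htight : ∀ i, TightSet (F i) (w i) Rc := by
    intro i
    have hC : ∀ f ∈ Rc, TightSet (F i) (w i) (R.inf' hRne (fun e => A i e f)) := by
      intro f hf
      exact tight_inf' (hsub i) (hw i) hRne _ (fun e he => (hA i e f he hf).1)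
    have hD : TightSet (F i) (w i) (Rc.sup' hRcne (fun f => R.inf' hRne (fun e => A i e f))) :=
      tight_sup' (hsub i) (hw i) hRcne _ hC
    have hEq : Rc.sup' hRcne (fun f => R.inf' hRne (fun e => A i e f)) = Rc := by
      apply Finset.Subset.antisymm
      · intro x hx
        rw [mem_sup' hRcne] at hx
        obtain ⟨f, hf, hxf⟩ := hx
        rw [mem_inf' hRne] at hxf
        rw [hRc, Finset.mem_sdiff]
        refine ⟨Finset.mem_univ x, fun hxR => ?_⟩
        exact (hA i x f hxR hf).2.2 (hxf x hxR)
      · intro f hf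
        rw [mem_sup' hRcne]
        exact ⟨f, hf, (mem_inf' hRne _ _).mpr (fun e he => (hA i e f he hf).2.1)⟩
    rwa [hEq] at hD
  have hge : 0 ≤ ∑ e ∈ Rc, res e := by
    have hw1 : ∑ e ∈ Rc, (∑ i, w i) e = ∑ i, F i Rc := by
      rw [show (∑ e ∈ Rc, (∑ i, w i) e) = ∑ e ∈ Rc, ∑ i, w i e from
        Finset.sum_congr rfl (fun e _ => euc_sum_apply _ _ _), Finset.sum_comm]
      exact Finset.sum_congr rfl (fun i _ => htight i)
    have hp1 : ∑ e ∈ Rc, (∑ i, p i) e = ∑ i, ∑ e ∈ Rc, p i e := by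
      rw [show (∑ e ∈ Rc, (∑ i, p i) e) = ∑ e ∈ Rc, ∑ i, p i e from
        Finset.sum_congr rfl (fun e _ => euc_sum_apply _ _ _), Finset.sum_comm]
    have h1 : ∑ e ∈ Rc, res e = ∑ i, (F i Rc - ∑ e ∈ Rc, p i e) := by
      simp only [hres, Finset.sum_sub_distrib, hw1, hp1]
    rw [h1]
    apply Finset.sum_nonneg
    intro i _
    have := (hp i).1 Rc
    linarith
  linarith

lemma reach_pos {F : Fin r → Finset (Fin n) → ℝ} (hsub : ∀ i, Submodular (F i))
    {w p : Vec n r} (hw : w ∈ feas n r F) (hp : p ∈ feas n r F)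
    {f0 : Fin n} (hf0 : (∑ i, w i) f0 - (∑ i, p i) f0 < 0) :
    ∃ e, Relation.ReflTransGen (Arc F w) e f0 ∧ 0 < (∑ i, w i) e - (∑ i, p i) e := by
  classical
  by_contra hcon
  push_neg at hcon
  set res : Fin n → ℝ := fun e => (∑ i, w i) e - (∑ i, p i) e with hres
  set R : Finset (Fin n) := Finset.univ.filter (fun e => Relation.ReflTransGen (Arc F w) e f0)
    with hR
  have hf0R : f0 ∈ R := by
    rw [hR, Finset.mem_filter]
    exact ⟨Finset.mem_univ f0, Relation.ReflTransGen.refl⟩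
  have hRneg : ∀ e ∈ R, res e ≤ 0 := by
    intro e he
    rw [hR, Finset.mem_filter] at he
    exact hcon e he.2
  have htot : ∑ e, res e = 0 := by
    have h1 : ∑ e, (∑ i, w i) e = ∑ i, F i Finset.univ := by
      rw [show (∑ e, (∑ i, w i) e) = ∑ e, ∑ i, w i e from
        Finset.sum_congr rfl (fun e _ => euc_sum_apply _ _ _), Finset.sum_comm]
      exact Finset.sum_congr rfl (fun i _ => (hw i).2)
    have h2 : ∑ e, (∑ i, p i) e = ∑ i, F i Finset.univ := by
      rw [show (∑ e, (∑ i, p i) e) = ∑ e, ∑ i, p i e from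
        Finset.sum_congr rfl (fun e _ => euc_sum_apply _ _ _), Finset.sum_comm]
      exact Finset.sum_congr rfl (fun i _ => (hp i).2)
    simp only [hres, Finset.sum_sub_distrib, h1, h2, sub_self]
  set Rc : Finset (Fin n) := Finset.univ \ R with hRc
  have hsplit : ∑ e ∈ Rc, res e + ∑ e ∈ R, res e = 0 := by
    rw [Finset.sum_sdiff (Finset.subset_univ R)]; exact htot
  have hRsum : ∑ e ∈ R, res e < 0 := by
    have h2 : ∑ e ∈ R \ {f0}, res e ≤ 0 :=
      Finset.sum_nonpos (fun e he => hRneg e (Finset.sdiff_subset he))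
    have h3 : ∑ e ∈ R, res e = ∑ e ∈ R \ {f0}, res e + res f0 :=
      Finset.sum_eq_sum_sdiff_singleton_add hf0R res
    have h4 : res f0 < 0 := hf0
    linarith
  have hRcne : Rc.Nonempty := by
    rcases Finset.eq_empty_or_nonempty Rc with h | h
    · exfalso
      have : ∑ e ∈ Rc, res e = 0 := by simp [h]
      linarith
    · exact h
  have hRne : R.Nonempty := ⟨f0, hf0R⟩
  have hblock : ∀ i (e f : Fin n), ∃ A : Finset (Fin n),
      e ∈ Rc → f ∈ R → TightSet (F i) (w i) A ∧ f ∈ A ∧ e ∉ A := by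
    intro i e f
    by_cases h : e ∈ Rc ∧ f ∈ R
    · have harc : ¬ Arc F w e f := by
        intro harc
        have heR : e ∈ R := by
          have hf' := h.2
          rw [hR, Finset.mem_filter] at hf' ⊢
          exact ⟨Finset.mem_univ e, Relation.ReflTransGen.head harc hf'.2⟩
        have he' := h.1
        rw [hRc, Finset.mem_sdiff] at he'
        exact he'.2 heR
      have hbl : Blocked (F i) (w i) e f := by
        by_contra hb; exact harc ⟨i, hb⟩
      obtain ⟨A, h1, h2, h3⟩ := hbl
      exact ⟨A, fun _ _ => ⟨h1, h2, h3⟩⟩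
    · exact ⟨∅, fun he hf => absurd ⟨he, hf⟩ h⟩
  choose A hA using hblock
  have htight : ∀ i, TightSet (F i) (w i) R := by
    intro i
    have hB : ∀ e ∈ Rc, TightSet (F i) (w i) (R.sup' hRne (fun f => A i e f)) := by
      intro e he
      exact tight_sup' (hsub i) (hw i) hRne _ (fun f hf => (hA i e f he hf).1)
    have hD : TightSet (F i) (w i) (Rc.inf' hRcne (fun e => R.sup' hRne (fun f => A i e f))) :=
      tight_inf' (hsub i) (hw i) hRcne _ hB
    have hEq : Rc.inf' hRcne (fun e => R.sup' hRne (fun f => A i e f)) = R := by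
      apply Finset.Subset.antisymm
      · intro x hx
        rw [mem_inf' hRcne] at hx
        by_contra hxR
        have hxRc : x ∈ Rc := by
          rw [hRc, Finset.mem_sdiff]; exact ⟨Finset.mem_univ x, hxR⟩
        have := hx x hxRc
        rw [mem_sup' hRne] at this
        obtain ⟨f, hf, hxf⟩ := this
        exact (hA i x f hxRc hf).2.2 hxf
      · intro f hf
        rw [mem_inf' hRcne]
        intro e he
        rw [mem_sup' hRne]
        exact ⟨f, hf, (hA i e f he hf).2.1⟩
    rwa [hEq] at hD
  have hge : 0 ≤ ∑ e ∈ R, res e := by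
    have hw1 : ∑ e ∈ R, (∑ i, w i) e = ∑ i, F i R := by
      rw [show (∑ e ∈ R, (∑ i, w i) e) = ∑ e ∈ R, ∑ i, w i e from
        Finset.sum_congr rfl (fun e _ => euc_sum_apply _ _ _), Finset.sum_comm]
      exact Finset.sum_congr rfl (fun i _ => htight i)
    have hp1 : ∑ e ∈ R, (∑ i, p i) e = ∑ i, ∑ e ∈ R, p i e := by
      rw [show (∑ e ∈ R, (∑ i, p i) e) = ∑ e ∈ R, ∑ i, p i e from
        Finset.sum_congr rfl (fun e _ => euc_sum_apply _ _ _), Finset.sum_comm]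
    have h1 : ∑ e ∈ R, res e = ∑ i, (F i R - ∑ e ∈ R, p i e) := by
      simp only [hres, Finset.sum_sub_distrib, hw1, hp1]
    rw [h1]
    apply Finset.sum_nonneg
    intro i _
    have := (hp i).1 R
    linarith
  linarith


section Chains
variable {α : Type*} {rel : α → α → Prop}

lemma chain_getD (d : α) : ∀ (l : List α) (a : α), List.Chain rel a l →
    ∀ j, j + 1 < (a :: l).length → rel ((a :: l).getD j d) ((a :: l).getD (j+1) d) := by
  intro l
  induction l with
  | nil => intro a _ j hj; simp at hj
  | cons c l' ih =>
      intro a hch j hj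
      rcases List.chain_cons.mp hch with ⟨h1, h2⟩
      cases j with
      | zero => simpa using h1
      | succ j' =>
          have hj' : j' + 1 < (c :: l').length := by
            simp only [List.length_cons] at hj ⊢; omega
          simpa using ih c h2 j' hj'

lemma dedup_chain : ∀ (k : ℕ) (l : List α) (a : α), l.length ≤ k → List.Chain rel a l →
    ∃ l' : List α, List.Chain rel a l' ∧
      (a :: l').getLast (by simp) = (a :: l).getLast (by simp) ∧
      (a :: l').Nodup ∧ ∀ x ∈ l', x ∈ l := by
  intro k
  induction k with
  | zero =>
      intro l a hl _
      have : l = [] := List.length_eq_zero_iff.mp (Nat.le_zero.mp hl)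
      subst this
      exact ⟨[], List.Chain.nil, rfl, List.nodup_singleton a, by simp⟩
  | succ k ih =>
      intro l a hl hch
      by_cases ha : a ∈ l
      · obtain ⟨s, t, rfl⟩ := List.append_of_mem ha
        have hsplit := List.isChain_cons_split.mp hch
        have hlt : t.length ≤ k := by
          simp only [List.length_append, List.length_cons] at hl; omega
        obtain ⟨l', h1, h2, h3, h4⟩ := ih t a hlt hsplit.2
        refine ⟨l', h1, ?_, h3, fun x hx => by simp [h4 x hx]⟩
        rw [h2]
        have h5 : (a :: (s ++ a :: t)).getLast (by simp) = (s ++ a :: t).getLast (by simp) :=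
          List.getLast_cons (by simp)
        have h6 : (s ++ a :: t).getLast (by simp) = (a :: t).getLast (by simp) :=
          List.getLast_append_of_right_ne_nil s (a :: t) (by simp)
        rw [h5, h6]
      · cases l with
        | nil => exact ⟨[], List.Chain.nil, rfl, List.nodup_singleton a, by simp⟩
        | cons c l' =>
            rcases List.chain_cons.mp hch with ⟨h1, h2⟩
            obtain ⟨l'', g1, g2, g3, g4⟩ := ih l' c (by
              simp only [List.length_cons] at hl; omega) h2
            refine ⟨c :: l'', List.chain_cons.mpr ⟨h1, g1⟩, ?_, ?_, ?_⟩
            · have e1 : (a :: c :: l'').getLast (by simp) = (c :: l'').getLast (by simp) :=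
                List.getLast_cons (by simp)
              have e2 : (a :: c :: l').getLast (by simp) = (c :: l').getLast (by simp) :=
                List.getLast_cons (by simp)
              rw [e1, e2]; exact g2
            · refine List.nodup_cons.mpr ⟨?_, g3⟩
              intro hmem
              rcases List.mem_cons.mp hmem with h | h
              · exact ha (h ▸ List.mem_cons_self (a := c) (l := l'))
              · exact ha (List.mem_cons_of_mem c (g4 _ h))
            · intro x hx
              rcases List.mem_cons.mp hx with h | h
              · simp [h]
              · exact List.mem_cons_of_mem c (g4 _ h)

end Chains

lemma exists_path_data {F : Fin r → Finset (Fin n) → ℝ} {w : Vec n r}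
    {e0 f0 : Fin n} (hpath : Relation.ReflTransGen (Arc F w) e0 f0) (hne : e0 ≠ f0) :
    ∃ (m : ℕ) (gp : Fin (m+1) → Fin n) (β : Fin m → Fin r),
      1 ≤ m ∧ m + 1 ≤ n ∧ Function.Injective gp ∧ gp 0 = e0 ∧ gp (Fin.last m) = f0 ∧
      ∀ k : Fin m, ¬ Blocked (F (β k)) (w (β k)) (gp k.castSucc) (gp k.succ) := by
  classical
  obtain ⟨l0, hch0, hlast0⟩ := List.exists_isChain_cons_of_relationReflTransGen hpath
  obtain ⟨l, hch, hlast, hnd, _⟩ := dedup_chain (rel := Arc F w) l0.length l0 e0 le_rfl hch0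
  rw [hlast0] at hlast
  have hlne : l ≠ [] := by
    intro h; subst h; simp at hlast; exact hne hlast
  set m := l.length with hm
  have hm1 : 1 ≤ m := by
    cases l with
    | nil => exact absurd rfl hlne
    | cons _ _ => simp [hm]
  have hLlen : (e0 :: l).length = m + 1 := by simp [hm]
  set gp : Fin (m+1) → Fin n := fun k => (e0 :: l).getD k.val e0 with hgp
  have hgetD : ∀ (j : ℕ), j < m + 1 → ∀ (hj : j < (e0 :: l).length),
      (e0 :: l).getD j e0 = (e0 :: l)[j] := by
    intro j _ hj
    exact List.getD_eq_getElem _ _ hj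
  have hinj : Function.Injective gp := by
    intro k1 k2 heq
    have hk1 : (k1 : ℕ) < (e0 :: l).length := by rw [hLlen]; exact k1.isLt
    have hk2 : (k2 : ℕ) < (e0 :: l).length := by rw [hLlen]; exact k2.isLt
    rw [hgp] at heq
    simp only at heq
    rw [hgetD k1 k1.isLt hk1, hgetD k2 k2.isLt hk2] at heq
    exact Fin.ext ((hnd.getElem_inj_iff).mp heq)
  have hstart : gp 0 = e0 := by simp [hgp]
  have hend : gp (Fin.last m) = f0 := by
    rw [hgp]
    simp only [Fin.val_last]
    have hmlt : m < (e0 :: l).length := by rw [hLlen]; omega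
    rw [hgetD m (by omega) hmlt]
    rw [← hlast]
    rw [List.getLast_eq_getElem]
    congr 1
  have harc : ∀ k : Fin m, Arc F w (gp k.castSucc) (gp k.succ) := by
    intro k
    have hk : k.val + 1 < (e0 :: l).length :=
      lt_of_lt_of_eq (Nat.succ_lt_succ k.isLt) hLlen.symm
    have h2 := chain_getD e0 l e0 hch k.val hk
    have e1 : gp k.castSucc = (e0 :: l).getD k.val e0 := rfl
    have e2 : gp k.succ = (e0 :: l).getD (k.val+1) e0 := rfl
    rw [e1, e2]; exact h2
  choose β hβ using fun k => harc k
  have hcard : m + 1 ≤ n := by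
    have := Fintype.card_le_of_injective gp hinj
    simpa using this
  exact ⟨m, gp, β, hm1, hcard, hinj, hstart, hend, hβ⟩

lemma exists_augment {F : Fin r → Finset (Fin n) → ℝ} (hsub : ∀ i, Submodular (F i))
    (hr : 1 ≤ r) {w : Vec n r} (hw : w ∈ feas n r F)
    {m : ℕ} (gp : Fin (m+1) → Fin n) (β : Fin m → Fin r) (hinj : Function.Injective gp)
    (harc : ∀ k : Fin m, ¬ Blocked (F (β k)) (w (β k)) (gp k.castSucc) (gp k.succ)) :
    ∃ (Δ : Vec n r) (ε : ℝ), 0 < ε ∧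
      (∀ t, 0 ≤ t → t ≤ ε → w + t • Δ ∈ feas n r F) ∧
      ‖Δ‖ ^ 2 ≤ 2 * m ∧
      (∀ e, (∑ i, Δ i) e =
        (if gp (Fin.last m) = e then (1:ℝ) else 0) - (if gp 0 = e then 1 else 0)) := by
  classical
  set δ : Fin r → Fin n → ℝ := fun i e => ∑ k : Fin m,
    if β k = i then
      ((if gp k.succ = e then (1:ℝ) else 0) - (if gp k.castSucc = e then 1 else 0))
    else 0 with hδ
  have hsum0 : ∀ i, (∑ e, δ i e) = 0 := by
    intro i
    rw [Finset.sum_comm]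
    apply Finset.sum_eq_zero
    intro k _
    by_cases h : β k = i
    · simp [h, Finset.sum_sub_distrib, Finset.sum_ite_eq]
    · simp [h]
  have htightle : ∀ i A, TightSet (F i) (w i) A → (∑ e ∈ A, δ i e) ≤ 0 := by
    intro i A hA
    rw [Finset.sum_comm]
    apply Finset.sum_nonpos
    intro k _
    by_cases h : β k = i
    · simp only [h, eq_self_iff_true, if_true]
      rw [Finset.sum_sub_distrib, Finset.sum_ite_eq, Finset.sum_ite_eq]
      by_cases h1 : gp k.succ ∈ A
      · have h2 : gp k.castSucc ∈ A := by
          by_contra h2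
          exact harc k ⟨A, by rw [h]; exact hA, h1, h2⟩
        simp [h1, h2]
      · by_cases h2 : gp k.castSucc ∈ A <;> simp [h1, h2]
    · simp [h]
  have hres : ∀ e, (∑ i, δ i e) =
      (if gp (Fin.last m) = e then (1:ℝ) else 0) - (if gp 0 = e then 1 else 0) := by
    intro e
    have h1 : (∑ i, δ i e) = ∑ k : Fin m,
        ((if gp k.succ = e then (1:ℝ) else 0) - (if gp k.castSucc = e then 1 else 0)) := by
      rw [Finset.sum_comm]
      apply Finset.sum_congr rfl
      intro k _
      rw [Finset.sum_ite_eq]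
      simp
    rw [h1]
    have h2 := Fin.sum_univ_castSucc (fun j : Fin (m+1) => if gp j = e then (1:ℝ) else 0)
    have h3 := Fin.sum_univ_succ (fun j : Fin (m+1) => if gp j = e then (1:ℝ) else 0)
    have h4 : ∑ k : Fin m, ((if gp k.succ = e then (1:ℝ) else 0)
        - (if gp k.castSucc = e then 1 else 0))
        = (∑ k : Fin m, (if gp k.succ = e then (1:ℝ) else 0))
          - ∑ k : Fin m, (if gp k.castSucc = e then (1:ℝ) else 0) :=
      Finset.sum_sub_distrib _ _
    rw [h4]
    linarith
  -- norm bound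
  have hcard1 : ∀ (i : Fin r) (e : Fin n),
      ((Finset.univ.filter (fun k : Fin m => β k = i ∧ gp k.succ = e)).card ≤ 1) := by
    intro i e
    rw [Finset.card_le_one]
    intro k1 h1 k2 h2
    simp only [Finset.mem_filter] at h1 h2
    have heq : gp k1.succ = gp k2.succ := by rw [h1.2.2, h2.2.2]
    exact Fin.succ_injective _ (hinj heq)
  have hcard2 : ∀ (i : Fin r) (e : Fin n),
      ((Finset.univ.filter (fun k : Fin m => β k = i ∧ gp k.castSucc = e)).card ≤ 1) := by
    intro i e
    rw [Finset.card_le_one]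
    intro k1 h1 k2 h2
    simp only [Finset.mem_filter] at h1 h2
    have heq : gp k1.castSucc = gp k2.castSucc := by rw [h1.2.2, h2.2.2]
    exact Fin.castSucc_injective _ (hinj heq)
  have hδeq : ∀ (i : Fin r) (e : Fin n), δ i e =
      ((Finset.univ.filter (fun k : Fin m => β k = i ∧ gp k.succ = e)).card : ℝ)
      - ((Finset.univ.filter (fun k : Fin m => β k = i ∧ gp k.castSucc = e)).card : ℝ) := by
    intro i e
    rw [← Finset.sum_boole, ← Finset.sum_boole, ← Finset.sum_sub_distrib]
    apply Finset.sum_congr rfl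
    intro k _
    by_cases h1 : β k = i <;> by_cases h2 : gp k.succ = e <;> by_cases h3 : gp k.castSucc = e <;>
      simp [h1, h2, h3]
  have hcount1 : (∑ i : Fin r, ∑ e : Fin n,
      ((Finset.univ.filter (fun k : Fin m => β k = i ∧ gp k.succ = e)).card : ℝ)) = m := by
    have h0 : (Finset.univ : Finset (Fin m)).card =
        ∑ b ∈ (Finset.univ : Finset (Fin r × Fin n)),
          ((Finset.univ.filter (fun k : Fin m => (β k, gp k.succ) = b)).card) :=
      Finset.card_eq_sum_card_fiberwise (fun x _ => Finset.mem_univ _)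
    have h1 : ∑ i : Fin r, ∑ e : Fin n,
        ((Finset.univ.filter (fun k : Fin m => β k = i ∧ gp k.succ = e)).card : ℝ)
        = ((∑ b ∈ (Finset.univ : Finset (Fin r × Fin n)),
            ((Finset.univ.filter (fun k : Fin m => (β k, gp k.succ) = b)).card) : ℕ) : ℝ) := by
      push_cast
      rw [Fintype.sum_prod_type]
      apply Finset.sum_congr rfl
      intro i _
      apply Finset.sum_congr rfl
      intro e _
      congr 2
      apply Finset.filter_congr
      intro k _
      simp [Prod.ext_iff]
    rw [h1, ← h0]
    simp
  have hcount2 : (∑ i : Fin r, ∑ e : Fin n,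
      ((Finset.univ.filter (fun k : Fin m => β k = i ∧ gp k.castSucc = e)).card : ℝ)) = m := by
    have h0 : (Finset.univ : Finset (Fin m)).card =
        ∑ b ∈ (Finset.univ : Finset (Fin r × Fin n)),
          ((Finset.univ.filter (fun k : Fin m => (β k, gp k.castSucc) = b)).card) :=
      Finset.card_eq_sum_card_fiberwise (fun x _ => Finset.mem_univ _)
    have h1 : ∑ i : Fin r, ∑ e : Fin n,
        ((Finset.univ.filter (fun k : Fin m => β k = i ∧ gp k.castSucc = e)).card : ℝ)
        = ((∑ b ∈ (Finset.univ : Finset (Fin r × Fin n)),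
            ((Finset.univ.filter (fun k : Fin m => (β k, gp k.castSucc) = b)).card) : ℕ) : ℝ) := by
      push_cast
      rw [Fintype.sum_prod_type]
      apply Finset.sum_congr rfl
      intro i _
      apply Finset.sum_congr rfl
      intro e _
      congr 2
      apply Finset.filter_congr
      intro k _
      simp [Prod.ext_iff]
    rw [h1, ← h0]
    simp
  have hnormsum : (∑ i : Fin r, ∑ e : Fin n, (δ i e)^2) ≤ 2*m := by
    have hpt : ∀ (i : Fin r) (e : Fin n), (δ i e)^2 ≤
        ((Finset.univ.filter (fun k : Fin m => β k = i ∧ gp k.succ = e)).card : ℝ)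
        + ((Finset.univ.filter (fun k : Fin m => β k = i ∧ gp k.castSucc = e)).card : ℝ) := by
      intro i e
      rw [hδeq i e]
      rcases Nat.le_one_iff_eq_zero_or_eq_one.mp (hcard1 i e) with h1 | h1 <;>
        rcases Nat.le_one_iff_eq_zero_or_eq_one.mp (hcard2 i e) with h2 | h2 <;>
          rw [h1, h2] <;> norm_num
    calc (∑ i : Fin r, ∑ e : Fin n, (δ i e)^2)
        ≤ ∑ i : Fin r, ∑ e : Fin n,
          (((Finset.univ.filter (fun k : Fin m => β k = i ∧ gp k.succ = e)).card : ℝ)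
          + ((Finset.univ.filter (fun k : Fin m => β k = i ∧ gp k.castSucc = e)).card : ℝ)) := by
          apply Finset.sum_le_sum
          intro i _
          apply Finset.sum_le_sum
          intro e _
          exact hpt i e
      _ = 2*m := by
          simp only [Finset.sum_add_distrib]
          rw [hcount1, hcount2]; ring
  have hmove : ∀ i, ∃ ε > 0, ∀ t, 0 ≤ t → t ≤ ε →
      (show EuclideanSpace ℝ (Fin n) from WithLp.toLp 2 (fun e => w i e + t * δ i e)) ∈ basePolytope n (F i) :=
    fun i => exists_move (hw i) (δ i) (hsum0 i) (htightle i)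
  choose ε hεpos hεmem using hmove
  have hFinr : (Finset.univ : Finset (Fin r)).Nonempty :=
    ⟨⟨0, hr⟩, Finset.mem_univ _⟩
  refine ⟨(show Vec n r from WithLp.toLp 2 (fun i => (show EuclideanSpace ℝ (Fin n) from WithLp.toLp 2 (δ i)))),
    Finset.univ.inf' hFinr ε, (Finset.lt_inf'_iff hFinr).mpr (fun i _ => hεpos i), ?_, ?_, ?_⟩
  · intro t ht0 htε i
    exact hεmem i t ht0 (le_trans htε (Finset.inf'_le ε (Finset.mem_univ i)))
  · rw [PiLp.norm_sq_eq_of_L2]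
    calc (∑ i : Fin r, ‖(show EuclideanSpace ℝ (Fin n) from WithLp.toLp 2 (δ i))‖^2)
        = ∑ i : Fin r, ∑ e : Fin n, (δ i e)^2 := by
          apply Finset.sum_congr rfl
          intro i _
          rw [PiLp.norm_sq_eq_of_L2]
          apply Finset.sum_congr rfl
          intro e _
          rw [Real.norm_eq_abs, sq_abs]
      _ ≤ 2*m := hnormsum
  · intro e
    rw [euc_sum_apply]
    exact hres e


lemma continuous_block (i : Fin r) : Continuous (fun y : Vec n r => y i) :=
  (continuous_apply i).comp (PiLp.continuous_ofLp 2 (fun _ : Fin r => EuclideanSpace ℝ (Fin n)))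

lemma continuous_coordE (e : Fin n) : Continuous (fun w : EuclideanSpace ℝ (Fin n) => w e) :=
  (continuous_apply e).comp (PiLp.continuous_ofLp 2 (fun _ : Fin n => ℝ))

lemma continuous_bp_sum (A : Finset (Fin n)) :
    Continuous (fun w : EuclideanSpace ℝ (Fin n) => ∑ e ∈ A, w e) :=
  continuous_finset_sum A (fun e _ => continuous_coordE e)

lemma isClosed_basePolytope (F : Finset (Fin n) → ℝ) : IsClosed (basePolytope n F) := by
  have h1 : basePolytope n F =
      (⋂ A : Finset (Fin n), {w : EuclideanSpace ℝ (Fin n) | ∑ e ∈ A, w e ≤ F A}) ∩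
      {w : EuclideanSpace ℝ (Fin n) | (∑ e, w e) = F Finset.univ} := by
    ext w
    simp only [basePolytope, Set.mem_setOf_eq, Set.mem_inter_iff, Set.mem_iInter]
  rw [h1]
  exact (isClosed_iInter (fun A => isClosed_le (continuous_bp_sum A) continuous_const)).inter
    (isClosed_eq (continuous_bp_sum Finset.univ) continuous_const)

lemma continuous_Asum : Continuous (fun y : Vec n r => ∑ i, y i) :=
  continuous_finset_sum _ (fun i _ => continuous_block i)

lemma isClosed_feas (F : Fin r → Finset (Fin n) → ℝ) : IsClosed (feas n r F) := by
  have h1 : feas n r F = ⋂ i, (fun y : Vec n r => y i) ⁻¹' (basePolytope n (F i)) := by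
    ext y
    simp only [feas, Set.mem_setOf_eq, Set.mem_iInter, Set.mem_preimage]
  rw [h1]
  exact isClosed_iInter (fun i => (isClosed_basePolytope _).preimage (continuous_block i))

lemma sq_le_imp_le {a b : ℝ} (ha : 0 ≤ a) (hb : 0 ≤ b) (h : a^2 ≤ b^2) : a ≤ b := by
  nlinarith

lemma key_distance {F : Fin r → Finset (Fin n) → ℝ} (hsub : ∀ i, Submodular (F i))
    (hn : 1 ≤ n) (hr : 1 ≤ r)
    {p0 : Vec n r} (hp0 : p0 ∈ feas n r F)
    {y : Vec n r} (hy : y ∈ feas n r F) :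
    ∃ q ∈ feas n r F, (∑ i, q i) = (∑ i, p0 i) ∧
      ‖y - q‖ ≤ (n : ℝ) * Real.sqrt r * ‖(∑ i, y i) - (∑ i, p0 i)‖ := by
  classical
  have hn0 : (0:ℝ) < n := by exact_mod_cast hn
  have hr0 : (0:ℝ) < r := by exact_mod_cast hr
  rcases eq_or_lt_of_le hr with hr1 | hr2
  · -- r = 1 : direct
    refine ⟨p0, hp0, rfl, ?_⟩
    subst hr1
    have h1 : ‖y - p0‖^2 = ‖(∑ i, y i) - (∑ i, p0 i)‖^2 := by
      rw [PiLp.norm_sq_eq_of_L2, Fin.sum_univ_one]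
      congr 2
      rw [Fin.sum_univ_one, Fin.sum_univ_one]
      rfl
    have hb : 0 ≤ (n:ℝ) * Real.sqrt 1 * ‖(∑ i, y i) - (∑ i, p0 i)‖ := by positivity
    have hsq1 : Real.sqrt ((1:ℕ):ℝ) = 1 := by
      rw [Nat.cast_one, Real.sqrt_one]
    apply sq_le_imp_le (norm_nonneg _) (by rw [hsq1]; positivity)
    rw [h1, mul_pow, mul_pow, hsq1]
    have hn1 : (1:ℝ) ≤ (n:ℝ) := by exact_mod_cast hn
    have hnsq : (1:ℝ) ≤ (n:ℝ)^2 := by nlinarith [hn1]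
    have hX := sq_nonneg ‖(∑ i, y i) - (∑ i, p0 i)‖
    have h2 := mul_le_mul_of_nonneg_right hnsq hX
    linarith [h2]
  · -- r ≥ 2
    have hr2' : (2:ℝ) ≤ r := by exact_mod_cast hr2
    set astar := (∑ i, p0 i) with hastar
    set lam := (n : ℝ) * Real.sqrt r with hlam
    have hlam_pos : 0 < lam := mul_pos hn0 (Real.sqrt_pos.mpr hr0)
    clear_value lam
    set ψ : Vec n r → ℝ := fun u => ‖y - u‖ + lam * ‖(∑ i, u i) - astar‖ with hψ
    have hψcont : Continuous ψ := by
      apply Continuous.add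
      · exact (continuous_const.sub continuous_id).norm
      · exact continuous_const.mul ((continuous_Asum.sub continuous_const).norm)
    set R0 := lam * ‖(∑ i, y i) - astar‖ + 1 with hR0
    have hR0pos : 0 < R0 := by
      have : 0 ≤ lam * ‖(∑ i, y i) - astar‖ := by positivity
      rw [hR0]; linarith
    set K := feas n r F ∩ Metric.closedBall y R0 with hK
    have hyK : y ∈ K := ⟨hy, Metric.mem_closedBall_self (le_of_lt hR0pos)⟩
    have hKcomp : IsCompact K :=
      Metric.isCompact_of_isClosed_isBounded
        ((isClosed_feas F).inter Metric.isClosed_closedBall)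
        (Metric.isBounded_closedBall.subset Set.inter_subset_right)
    obtain ⟨wb, hwbK, hwbmin⟩ := hKcomp.exists_isMinOn ⟨y, hyK⟩ hψcont.continuousOn
    have hψy : ψ y = lam * ‖(∑ i, y i) - astar‖ := by
      rw [hψ]; simp
    have hmin : ∀ u ∈ feas n r F, ψ wb ≤ ψ u := by
      intro u hu
      by_cases huK : u ∈ K
      · exact hwbmin huK
      · have hdist : R0 < dist u y := by
          by_contra hc
          push_neg at hc
          exact huK ⟨hu, Metric.mem_closedBall.mpr hc⟩
        have h1 : ψ wb ≤ ψ y := hwbmin hyK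
        have h2 : ψ y < ψ u := by
          have h3 : R0 < ‖y - u‖ := by
            rw [norm_sub_rev, ← dist_eq_norm]
            exact hdist
          have h4 : 0 ≤ lam * ‖(∑ i, u i) - astar‖ := by positivity
          have h5 : ψ u = ‖y - u‖ + lam * ‖(∑ i, u i) - astar‖ := rfl
          rw [hψy, h5]
          rw [hR0] at h3
          linarith
        linarith
    by_cases hres0 : (∑ i, wb i) - astar = 0
    · refine ⟨wb, hwbK.1, sub_eq_zero.mp hres0, ?_⟩
      have h1 : ψ wb ≤ ψ y := hmin y hy
      rw [hψy] at h1
      have h2 : ψ wb = ‖y - wb‖ := by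
        rw [hψ]
        simp [hres0]
      rw [h2] at h1
      exact h1
    · exfalso
      set res : Fin n → ℝ := fun e => (∑ i, wb i) e - (∑ i, p0 i) e with hresdef
      set Rv := ‖(∑ i, wb i) - astar‖ with hRv
      have hRvpos : 0 < Rv := by
        rw [hRv]; exact norm_pos_iff.mpr hres0
      have hNempty : (Finset.univ : Finset (Fin n)).Nonempty := ⟨⟨0, hn⟩, Finset.mem_univ _⟩
      obtain ⟨estar, _, hmax⟩ := Finset.exists_max_image Finset.univ (fun e => |res e|) hNempty
      set Rmax := |res estar| with hRmax
      have hRmaxpos : 0 < Rmax := by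
        rcases lt_or_eq_of_le (abs_nonneg (res estar)) with h | h
        · rw [hRmax]; exact h
        · exfalso
          apply hres0
          refine PiLp.ext (fun e => ?_)
          have h1 := hmax e (Finset.mem_univ e)
          rw [hRmax, ← h] at h1
          have h2 : res e = 0 := abs_eq_zero.mp (le_antisymm h1 (abs_nonneg _))
          exact h2
      have hressq : Rv^2 = ∑ e, (res e)^2 := by
        rw [hRv, PiLp.norm_sq_eq_of_L2]
        apply Finset.sum_congr rfl
        intro e _
        rw [Real.norm_eq_abs, sq_abs]
        rfl
      have hRvRmax : Rv ≤ Real.sqrt n * Rmax := by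
        apply sq_le_imp_le (le_of_lt hRvpos) (by positivity)
        rw [mul_pow, Real.sq_sqrt (le_of_lt hn0), hressq]
        calc (∑ e, (res e)^2) ≤ ∑ _e : Fin n, Rmax^2 := by
              apply Finset.sum_le_sum
              intro e _
              have h1 := hmax e (Finset.mem_univ e)
              calc (res e)^2 = |res e|^2 := (sq_abs _).symm
                _ ≤ Rmax^2 := pow_le_pow_left₀ (abs_nonneg _) h1 2
          _ = n * Rmax^2 := by
              rw [Finset.sum_const, Finset.card_univ, Fintype.card_fin, nsmul_eq_mul]
      have hkeyex : ∃ (snode tnode : Fin n), Relation.ReflTransGen (Arc F wb) snode tnode ∧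
          0 < res snode ∧ res tnode < 0 ∧ Rmax ≤ res snode - res tnode := by
        rcases lt_trichotomy (res estar) 0 with hneg | hzero | hpos
        · obtain ⟨e, hpath, hepos⟩ := reach_pos hsub hwbK.1 hp0 hneg
          refine ⟨e, estar, hpath, hepos, hneg, ?_⟩
          have h1 : Rmax = -(res estar) := by rw [hRmax, abs_of_neg hneg]
          have hepos' : 0 < res e := hepos
          linarith
        · exfalso
          rw [hRmax, hzero, abs_zero] at hRmaxpos
          linarith
        · obtain ⟨f, hpath, hfneg⟩ := reach_neg hsub hwbK.1 hp0 hpos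
          refine ⟨estar, f, hpath, hpos, hfneg, ?_⟩
          have h1 : Rmax = res estar := by rw [hRmax, abs_of_pos hpos]
          have hfneg' : res f < 0 := hfneg
          linarith
      obtain ⟨snode, tnode, hpath, hspos, htneg, hcge⟩ := hkeyex
      have hsne : snode ≠ tnode := by
        intro h
        rw [h] at hspos
        linarith
      obtain ⟨m, gp, β, hm1, hmn, hinj, hgp0, hgplast, harcs⟩ := exists_path_data hpath hsne
      obtain ⟨Δ, ε, hεpos, hfeast, hΔnorm, hures⟩ := exists_augment hsub hr hwbK.1 gp β hinj harcs
      set c := res snode - res tnode with hc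
      have hcpos : 0 < c := by rw [hc]; linarith
      have hΔle : ‖Δ‖ ≤ Real.sqrt (2*((n:ℝ)-1)) := by
        have hn1 : (0:ℝ) ≤ 2*((n:ℝ)-1) := by
          have : (1:ℝ) ≤ n := by exact_mod_cast hn
          linarith
        apply sq_le_imp_le (norm_nonneg _) (Real.sqrt_nonneg _)
        rw [Real.sq_sqrt hn1]
        have h2 : (m:ℝ) + 1 ≤ (n:ℝ) := by exact_mod_cast hmn
        calc ‖Δ‖^2 ≤ 2*m := hΔnorm
          _ ≤ 2*((n:ℝ)-1) := by linarith
      have hsqrtn_pos : 0 < Real.sqrt n := Real.sqrt_pos.mpr hn0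
      have hc2 : Rv ≤ Real.sqrt n * c := by
        calc Rv ≤ Real.sqrt n * Rmax := hRvRmax
          _ ≤ Real.sqrt n * c := mul_le_mul_of_nonneg_left hcge (le_of_lt hsqrtn_pos)
      set gap := Real.sqrt (2*(n:ℝ)) - Real.sqrt (2*((n:ℝ)-1)) with hgap
      have hgappos : 0 < gap := by
        rw [hgap, sub_pos]
        apply Real.sqrt_lt_sqrt
        · have : (1:ℝ) ≤ n := by exact_mod_cast hn
          linarith
        · linarith
      clear_value gap
      set t := min (min ε (c/2)) (min (Rv^2/(2*c)) (gap * Rv / (2*lam))) with ht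
      have htpos : 0 < t := by
        apply lt_min (lt_min hεpos (by linarith))
        exact lt_min (by positivity) (by positivity)
      have htε : t ≤ ε := le_trans (min_le_left _ _) (min_le_left _ _)
      have htc2 : t ≤ c/2 := le_trans (min_le_left _ _) (min_le_right _ _)
      have htRv : t ≤ Rv^2/(2*c) := le_trans (min_le_right _ _) (min_le_left _ _)
      have htgap : t ≤ gap * Rv / (2*lam) := le_trans (min_le_right _ _) (min_le_right _ _)
      clear_value t
      have hw' : wb + t • Δ ∈ feas n r F := hfeast t (le_of_lt htpos) htε
      -- algebraic facts
      have hsum' : (∑ i, (wb + t • Δ) i) = (∑ i, wb i) + t • (∑ i, Δ i) := by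
        have h1 : (∑ i, (wb + t • Δ) i) = ∑ i, (wb i + t • Δ i) := rfl
        rw [h1, Finset.sum_add_distrib, ← Finset.smul_sum]
      have hresnew : (∑ i, (wb + t • Δ) i) - astar = ((∑ i, wb i) - astar) + t • (∑ i, Δ i) := by
        rw [hsum']; abel
      have hinner : ⟪(∑ i, wb i) - astar, (∑ i, Δ i)⟫ = -c := by
        rw [PiLp.inner_apply]
        have h1 : ∀ e : Fin n, ⟪((∑ i, wb i) - astar) e, (∑ i, Δ i) e⟫ =
            res e * ((if gp (Fin.last m) = e then (1:ℝ) else 0) - (if gp 0 = e then 1 else 0)) := by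
          intro e
          rw [RCLike.inner_apply, conj_trivial, hures e]
          rw [mul_comm]; rfl
        rw [Finset.sum_congr rfl (fun e _ => h1 e)]
        have h2 : ∀ e : Fin n, res e * ((if gp (Fin.last m) = e then (1:ℝ) else 0)
            - (if gp 0 = e then 1 else 0))
            = (if gp (Fin.last m) = e then res e else 0) - (if gp 0 = e then res e else 0) := by
          intro e
          by_cases h3 : gp (Fin.last m) = e <;> by_cases h4 : gp 0 = e <;> simp [h3, h4]
        rw [Finset.sum_congr rfl (fun e _ => h2 e), Finset.sum_sub_distrib,
          Finset.sum_ite_eq, Finset.sum_ite_eq]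
        simp [hgp0, hgplast, hc]
      have hunorm2 : ‖(∑ i, Δ i)‖^2 = 2 := by
        rw [PiLp.norm_sq_eq_of_L2]
        have h1 : ∀ e : Fin n, ‖(∑ i, Δ i) e‖^2 =
            (if gp (Fin.last m) = e then (1:ℝ) else 0) + (if gp 0 = e then 1 else 0) := by
          intro e
          rw [Real.norm_eq_abs, sq_abs, hures e]
          by_cases h3 : gp (Fin.last m) = e <;> by_cases h4 : gp 0 = e
          · exfalso
            apply hsne
            rw [← hgp0, ← hgplast, h3, h4]
          · simp [h3, h4]
          · simp [h3, h4]
          · simp [h3, h4]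
        rw [Finset.sum_congr rfl (fun e _ => h1 e), Finset.sum_add_distrib,
          Finset.sum_ite_eq, Finset.sum_ite_eq]
        norm_num
      have hnormres' : ‖((∑ i, wb i) - astar) + t • (∑ i, Δ i)‖^2 = Rv^2 - 2*t*c + t^2*2 := by
        rw [norm_add_sq_real, real_inner_smul_right, hinner, norm_smul, Real.norm_eq_abs,
          mul_pow, sq_abs, hunorm2, ← hRv]
        ring
      have hh1 : 0 ≤ t*c - t^2 := by
        have h1 : t*c - t^2 = t*(c-t) := by ring
        rw [h1]
        exact mul_nonneg (le_of_lt htpos) (by linarith)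
      have hh2 : 2*(t*c) ≤ Rv^2 := by
        rw [le_div_iff₀ (by linarith : (0:ℝ) < 2*c)] at htRv
        linarith
      have hbnonneg : 0 ≤ Rv - (t*c - t^2)/Rv := by
        have h1 : (t*c - t^2)/Rv ≤ Rv := by
          rw [div_le_iff₀ hRvpos]
          have h2 : Rv^2 = Rv*Rv := by ring
          linarith [hh2, sq_nonneg t]
        linarith
      have hble : ‖((∑ i, wb i) - astar) + t • (∑ i, Δ i)‖ ≤ Rv - (t*c - t^2)/Rv := by
        apply sq_le_imp_le (norm_nonneg _) hbnonneg
        rw [hnormres']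
        have hexp : (Rv - (t*c - t^2)/Rv)^2 = Rv^2 - 2*(t*c - t^2) + ((t*c - t^2)/Rv)^2 := by
          field_simp
          ring
        rw [hexp]
        linarith [sq_nonneg ((t*c - t^2)/Rv)]
      have hkey2 : ‖Δ‖ * Rv < lam * (c - t) := by
        have h1 : ‖Δ‖ * Rv ≤ Real.sqrt (2*((n:ℝ)-1)) * Rv :=
          mul_le_mul_of_nonneg_right hΔle (le_of_lt hRvpos)
        have e3 : Real.sqrt n * Real.sqrt n = (n:ℝ) := Real.mul_self_sqrt (le_of_lt hn0)
        have h2 : Real.sqrt (2*(n:ℝ)) * Rv ≤ lam * c := by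
          have e1 : Rv / Real.sqrt n ≤ c := by
            rw [div_le_iff₀ hsqrtn_pos]
            calc Rv ≤ Real.sqrt n * c := hc2
              _ = c * Real.sqrt n := by ring
          have e4 : Real.sqrt 2 ≤ Real.sqrt r := Real.sqrt_le_sqrt hr2'
          have e5 : Real.sqrt (2*(n:ℝ)) = Real.sqrt 2 * Real.sqrt n :=
            Real.sqrt_mul (by norm_num) _
          have e6 : Real.sqrt (2*(n:ℝ)) * Rv ≤ Real.sqrt 2 * Real.sqrt n * (Real.sqrt n * c) := by
            rw [e5]
            apply mul_le_mul_of_nonneg_left hc2 (by positivity)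
          have e7 : Real.sqrt 2 * Real.sqrt n * (Real.sqrt n * c) = Real.sqrt 2 * (n:ℝ) * c := by
            rw [show Real.sqrt 2 * Real.sqrt n * (Real.sqrt n * c)
              = Real.sqrt 2 * (Real.sqrt n * Real.sqrt n) * c by ring, e3]
          have e8 : Real.sqrt 2 * (n:ℝ) * c ≤ lam * c := by
            apply mul_le_mul_of_nonneg_right _ (le_of_lt hcpos)
            rw [hlam]
            calc Real.sqrt 2 * (n:ℝ) = (n:ℝ) * Real.sqrt 2 := by ring
              _ ≤ (n:ℝ) * Real.sqrt r := by
                  apply mul_le_mul_of_nonneg_left e4 (le_of_lt hn0)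
          have e9 : Real.sqrt (2*(n:ℝ)) * Rv ≤ Real.sqrt 2 * (n:ℝ) * c := by
            rw [← e7]; exact e6
          linarith [e9, e8]
        have h3 : lam * t ≤ gap * Rv / 2 := by
          rw [le_div_iff₀ (by linarith : (0:ℝ) < 2*lam)] at htgap
          linarith [htgap]
        have h4 : Real.sqrt (2*((n:ℝ)-1)) * Rv < Real.sqrt (2*(n:ℝ)) * Rv - gap * Rv / 2 := by
          have h5 : gap * Rv > 0 := mul_pos hgappos hRvpos
          have h6 : gap * Rv = Real.sqrt (2*(n:ℝ)) * Rv - Real.sqrt (2*((n:ℝ)-1)) * Rv := by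
            rw [hgap]; ring
          linarith [h5, h6]
        calc ‖Δ‖ * Rv ≤ Real.sqrt (2*((n:ℝ)-1)) * Rv := h1
          _ < Real.sqrt (2*(n:ℝ)) * Rv - gap * Rv / 2 := h4
          _ ≤ lam * c - lam * t := sub_le_sub h2 h3
          _ = lam * (c - t) := by ring
      have hψw' : ψ (wb + t • Δ) < ψ wb := by
        have ha1 : ‖y - (wb + t • Δ)‖ ≤ ‖y - wb‖ + t * ‖Δ‖ := by
          have h1 : y - (wb + t • Δ) = (y - wb) - t • Δ := by abel
          rw [h1]
          calc ‖(y - wb) - t • Δ‖ ≤ ‖y - wb‖ + ‖t • Δ‖ := norm_sub_le _ _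
            _ = ‖y - wb‖ + t * ‖Δ‖ := by
                rw [norm_smul, Real.norm_eq_abs, abs_of_pos htpos]
        have ha3 : t * ‖Δ‖ < lam * ((t*c - t^2)/Rv) := by
          have hq : lam * ((t*c - t^2)/Rv) = (lam * (t*c - t^2))/Rv := by ring
          rw [hq, lt_div_iff₀ hRvpos]
          have h5 := mul_lt_mul_of_pos_left hkey2 htpos
          linarith [h5]
        have ha4 : ψ wb = ‖y - wb‖ + lam * Rv := by rw [hRv]
        have ha5 : ψ (wb + t • Δ) = ‖y - (wb + t • Δ)‖
            + lam * ‖(∑ i, (wb + t • Δ) i) - astar‖ := rfl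
        have ha6 : lam * ‖(∑ i, (wb + t • Δ) i) - astar‖ ≤ lam * (Rv - (t*c - t^2)/Rv) := by
          apply mul_le_mul_of_nonneg_left _ (le_of_lt hlam_pos)
          rw [hresnew]
          exact hble
        have ha7 : lam * (Rv - (t*c - t^2)/Rv) = lam * Rv - lam * ((t*c - t^2)/Rv) := by ring
        rw [ha4, ha5]
        linarith
      exact absurd (hmin _ hw') (not_le.mpr hψw')


lemma convex_basePolytope (F : Finset (Fin n) → ℝ) : Convex ℝ (basePolytope n F) := by
  intro u hu v hv a b ha hb hab
  constructor
  · intro A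
    have h1 : (∑ e ∈ A, (a • u + b • v) e) = a * (∑ e ∈ A, u e) + b * (∑ e ∈ A, v e) := by
      rw [Finset.mul_sum, Finset.mul_sum, ← Finset.sum_add_distrib]
      exact Finset.sum_congr rfl (fun e _ => rfl)
    rw [h1]
    calc a * (∑ e ∈ A, u e) + b * (∑ e ∈ A, v e) ≤ a * F A + b * F A :=
          add_le_add (mul_le_mul_of_nonneg_left (hu.1 A) ha)
            (mul_le_mul_of_nonneg_left (hv.1 A) hb)
      _ = F A := by rw [← add_mul, hab, one_mul]
  · have h1 : (∑ e, (a • u + b • v) e) = a * (∑ e, u e) + b * (∑ e, v e) := by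
      rw [Finset.mul_sum, Finset.mul_sum, ← Finset.sum_add_distrib]
      exact Finset.sum_congr rfl (fun e _ => rfl)
    rw [h1, hu.2, hv.2, ← add_mul, hab, one_mul]

lemma convex_feas (F : Fin r → Finset (Fin n) → ℝ) : Convex ℝ (feas n r F) := by
  intro u hu v hv a b ha hb hab i
  exact convex_basePolytope (F i) (hu i) (hv i) ha hb hab

lemma nonneg_of_forall_ge {X M : ℝ} (hM : 0 ≤ M)
    (h : ∀ τ : ℝ, 0 < τ → τ ≤ 1 → -(τ * M)/2 ≤ X) : 0 ≤ X := by
  by_cases hM0 : M = 0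
  · have h1 := h 1 one_pos le_rfl
    rw [hM0] at h1
    norm_num at h1
    exact h1
  · have hMpos : 0 < M := lt_of_le_of_ne hM (Ne.symm hM0)
    by_contra hX
    push_neg at hX
    have hτ : 0 < min 1 (-X/M) := lt_min one_pos (div_pos (by linarith) hMpos)
    have h2 := h _ hτ (min_le_left _ _)
    have h3 : min 1 (-X/M) ≤ -X/M := min_le_right _ _
    have h4 : min 1 (-X/M) * M ≤ (-X/M) * M := mul_le_mul_of_nonneg_right h3 hM
    rw [div_mul_cancel₀ _ hM0] at h4
    linarith

lemma block_ineq {V : Type*} [NormedAddCommGroup V] [InnerProductSpace ℝ V]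
    (a yi pi u : V)
    (hVI : 0 ≤ ⟪(2:ℝ)•a + (2:ℝ)•(u - yi), pi - u⟫) :
    ‖u - pi‖^2 + (‖a‖^2 + 2*⟪a, u - yi⟫ + ‖u - yi‖^2)
      ≤ ‖yi - pi‖^2 + ‖a‖^2 + 2*⟪a, pi - yi⟫ := by
  have e1 : ‖u - pi‖^2 = ‖u‖^2 - 2*⟪u,pi⟫ + ‖pi‖^2 := norm_sub_sq_real u pi
  have e2 : ‖yi - pi‖^2 = ‖yi‖^2 - 2*⟪yi,pi⟫ + ‖pi‖^2 := norm_sub_sq_real yi pi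
  have e3 : ‖u - yi‖^2 = ‖u‖^2 - 2*⟪u,yi⟫ + ‖yi‖^2 := norm_sub_sq_real u yi
  have e4 : ⟪a, u - yi⟫ = ⟪a,u⟫ - ⟪a,yi⟫ := inner_sub_right a u yi
  have e5 : ⟪a, pi - yi⟫ = ⟪a,pi⟫ - ⟪a,yi⟫ := inner_sub_right a pi yi
  have e6 : ⟪(2:ℝ)•a + (2:ℝ)•(u - yi), pi - u⟫
      = 2*⟪a,pi⟫ - 2*⟪a,u⟫ + 2*(⟪u,pi⟫ - ⟪u,u⟫ - ⟪yi,pi⟫ + ⟪yi,u⟫) := by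
    simp only [inner_add_left, inner_sub_left, inner_sub_right, real_inner_smul_left]
    ring
  have e7 : ⟪u,u⟫ = ‖u‖^2 := real_inner_self_eq_norm_sq u
  have e8 : ⟪yi,u⟫ = ⟪u,yi⟫ := real_inner_comm u yi
  rw [e6, e7, e8] at hVI
  linarith [hVI, e1, e2, e3, e4, e5]

lemma onestep {F : Fin r → Finset (Fin n) → ℝ} (hsub : ∀ i, Submodular (F i))
    (hn : 1 ≤ n) (hr : 1 ≤ r)
    (T : Vec n r → Fin r → Vec n r)
    (hT : ∀ (y : Vec n r) (i : Fin r),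
      (∀ j, j ≠ i → T y i j = y j) ∧
      T y i i ∈ basePolytope n (F i) ∧
      (∀ z ∈ basePolytope n (F i),
        ⟪gradBlock n r y, T y i i - y i⟫ + ‖T y i i - y i‖ ^ 2
          ≤ ⟪gradBlock n r y, z - y i⟫ + ‖z - y i‖ ^ 2))
    (E : Set (Vec n r)) (hE : E = {y : Vec n r | IsOptimal n r F y})
    (gstar : ℝ) (hgstar : IsLeast (g n r '' feas n r F) gstar)
    {y : Vec n r} (hy : y ∈ feas n r F) :
    ∑ i : Fin r, (Metric.infDist (T y i) E ^ 2 + g n r (T y i) - gstar)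
      ≤ (r:ℝ) * ((1 - 2 / ((n : ℝ) ^ 2 * (r : ℝ) ^ 2 + r))
          * (Metric.infDist y E ^ 2 + g n r y - gstar)) := by
  classical
  have hn1 : (1:ℝ) ≤ n := by exact_mod_cast hn
  have hr1 : (1:ℝ) ≤ r := by exact_mod_cast hr
  -- basic optimum structure
  obtain ⟨p0, hp0feas, hgp0⟩ := hgstar.1
  have hlow : ∀ z ∈ feas n r F, gstar ≤ g n r z := fun z hz =>
    hgstar.2 (Set.mem_image_of_mem _ hz)
  have hchar : ∀ q, q ∈ E ↔ (q ∈ feas n r F ∧ g n r q ≤ gstar) := by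
    intro q
    rw [hE]
    constructor
    · intro hq
      exact ⟨hq.1, by rw [← hgp0]; exact hq.2 p0 hp0feas⟩
    · intro hq
      exact ⟨hq.1, fun z hz => le_trans hq.2 (hlow z hz)⟩
  have hp0E : p0 ∈ E := (hchar p0).mpr ⟨hp0feas, le_of_eq hgp0⟩
  have hgstar_eq : gstar = ‖∑ i, p0 i‖^2 := by rw [← hgp0]; rfl
  -- uniqueness of the optimal sum
  have hsumuniq : ∀ q ∈ E, (∑ i, q i) = (∑ i, p0 i) := by
    intro q hq
    obtain ⟨hqfeas, hqle⟩ := (hchar q).mp hq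
    have hgq : g n r q = gstar := le_antisymm hqle (hlow q hqfeas)
    have hmid : (1/2:ℝ) • p0 + (1/2:ℝ) • q ∈ feas n r F :=
      convex_feas F hp0feas hqfeas (by norm_num) (by norm_num) (by norm_num)
    have hgmid : gstar ≤ g n r ((1/2:ℝ) • p0 + (1/2:ℝ) • q) := hlow _ hmid
    have hsummid : (∑ i, ((1/2:ℝ) • p0 + (1/2:ℝ) • q) i)
        = (1/2:ℝ) • (∑ i, p0 i) + (1/2:ℝ) • (∑ i, q i) := by
      have h1 : (∑ i, ((1/2:ℝ) • p0 + (1/2:ℝ) • q) i)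
          = ∑ i, ((1/2:ℝ) • p0 i + (1/2:ℝ) • q i) := rfl
      rw [h1, Finset.sum_add_distrib, ← Finset.smul_sum, ← Finset.smul_sum]
    have hgmid2 : g n r ((1/2:ℝ) • p0 + (1/2:ℝ) • q)
        = ‖(1/2:ℝ) • (∑ i, p0 i) + (1/2:ℝ) • (∑ i, q i)‖^2 := by
      show ‖∑ i, ((1/2:ℝ) • p0 + (1/2:ℝ) • q) i‖^2 = _
      rw [hsummid]
    have hgq' : ‖∑ i, q i‖^2 = gstar := by rw [← hgq]; rfl
    have hpar : ‖(1/2:ℝ) • (∑ i, p0 i) + (1/2:ℝ) • (∑ i, q i)‖^2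
        = gstar - ‖(∑ i, p0 i) - (∑ i, q i)‖^2/4 := by
      have h1 := norm_add_sq_real ((1/2:ℝ) • (∑ i, p0 i)) ((1/2:ℝ) • (∑ i, q i))
      have h2 := norm_sub_sq_real (∑ i, p0 i) (∑ i, q i)
      have h3 : ⟪(1/2:ℝ) • (∑ i, p0 i), (1/2:ℝ) • (∑ i, q i)⟫
          = (1/4) * ⟪(∑ i, p0 i), (∑ i, q i)⟫ := by
        rw [real_inner_smul_left, real_inner_smul_right]; ring
      have h4 : ‖(1/2:ℝ) • (∑ i, p0 i)‖^2 = (1/4) * ‖∑ i, p0 i‖^2 := by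
        rw [norm_smul, Real.norm_eq_abs, mul_pow, sq_abs]; ring
      have h5 : ‖(1/2:ℝ) • (∑ i, q i)‖^2 = (1/4) * ‖∑ i, q i‖^2 := by
        rw [norm_smul, Real.norm_eq_abs, mul_pow, sq_abs]; ring
      rw [h1, h3, h4, h5]
      rw [← hgstar_eq] at *
      linarith [h2, hgq']
    rw [hgmid2, hpar] at hgmid
    have h6 : ‖(∑ i, p0 i) - (∑ i, q i)‖^2 ≤ 0 := by linarith
    have h7 : ‖(∑ i, p0 i) - (∑ i, q i)‖ = 0 := by
      nlinarith [norm_nonneg ((∑ i, p0 i) - (∑ i, q i))]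
    have h8 := norm_eq_zero.mp h7
    have h9 := sub_eq_zero.mp h8
    exact h9.symm
  -- g is continuous, E is closed and nonempty
  have hgcont : Continuous (g n r) := by
    show Continuous (fun y : Vec n r => ‖∑ i, y i‖^2)
    exact (continuous_Asum.norm).pow 2
  have hEset : E = feas n r F ∩ {q | g n r q ≤ gstar} := by
    ext q
    rw [hchar q]
    rfl
  have hEclosed : IsClosed E := by
    rw [hEset]
    exact (isClosed_feas F).inter (isClosed_le hgcont continuous_const)
  obtain ⟨p, hpE, hpdist⟩ := hEclosed.exists_infDist_eq_dist ⟨p0, hp0E⟩ y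
  have hpfeas : p ∈ feas n r F := ((hchar p).mp hpE).1
  have hpsum : (∑ i, p i) = (∑ i, p0 i) := hsumuniq p hpE
  have hD : Metric.infDist y E ^ 2 = ‖y - p‖^2 := by
    rw [hpdist, dist_eq_norm]
  -- notation
  set a := (∑ i, y i) with hA
  set astar := (∑ i, p0 i) with hAstar
  set M := ‖a - astar‖^2 with hM
  set G := g n r y - gstar with hG
  set D := ‖y - p‖^2 with hDdef
  have hMnonneg : 0 ≤ M := by rw [hM]; positivity
  have hga : g n r y = ‖a‖^2 := rfl
  -- M ≤ G
  have hident : 2*⟪a, astar - a⟫ = gstar - g n r y - M := by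
    have h1 := norm_sub_sq_real a astar
    have h2 : ⟪a, astar - a⟫ = ⟪a, astar⟫ - ‖a‖^2 := by
      rw [inner_sub_right, real_inner_self_eq_norm_sq]
    rw [h2, hga, hgstar_eq]
    rw [hM] at *
    linarith [h1]
  have hMG : M ≤ G := by
    have hX : 0 ≤ ⟪astar, a - astar⟫ := by
      apply nonneg_of_forall_ge (M := 2*M) (by linarith)
      intro τ hτ0 hτ1
      have hzfeas : p0 + τ • (y - p0) ∈ feas n r F := by
        have he : p0 + τ • (y - p0) = (1-τ) • p0 + τ • y := by
          rw [smul_sub, sub_smul, one_smul]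
          abel
        rw [he]
        exact convex_feas F hp0feas hy (by linarith) (by linarith) (by ring)
      have hzsum : (∑ i, (p0 + τ • (y - p0)) i) = astar + τ • (a - astar) := by
        have h1 : (∑ i, (p0 + τ • (y - p0)) i) = ∑ i, (p0 i + τ • (y i - p0 i)) := rfl
        rw [h1, Finset.sum_add_distrib, ← Finset.smul_sum, Finset.sum_sub_distrib]
      have hzg : gstar ≤ ‖astar + τ • (a - astar)‖^2 := by
        have h1 := hlow _ hzfeas
        have h2 : g n r (p0 + τ • (y - p0)) = ‖astar + τ • (a - astar)‖^2 := by
          show ‖∑ i, (p0 + τ • (y - p0)) i‖^2 = _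
          rw [hzsum]
        rw [h2] at h1
        exact h1
      have h3 : ‖astar + τ • (a - astar)‖^2
          = ‖astar‖^2 + 2*τ*⟪astar, a - astar⟫ + τ^2*M := by
        rw [norm_add_sq_real, real_inner_smul_right, norm_smul, Real.norm_eq_abs,
          mul_pow, sq_abs, hM]
        ring
      rw [h3, ← hgstar_eq] at hzg
      have hτM : -(τ * (2*M))/2 = -(τ*M) := by ring
      rw [hτM]
      nlinarith [hzg, sq_nonneg τ, mul_pos hτ0 hτ0]
    have hGM2 : G - M = 2*⟪astar, a - astar⟫ := by
      have h1 := norm_sub_sq_real a astar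
      have h2 : ⟪astar, a - astar⟫ = ⟪astar, a⟫ - ‖astar‖^2 := by
        rw [inner_sub_right, real_inner_self_eq_norm_sq]
      have h3 : ⟪astar, a⟫ = ⟪a, astar⟫ := real_inner_comm a astar
      rw [hG, hM, hga, hgstar_eq, h2, h3]
      linarith [h1]
    linarith [hGM2, hX]
  -- D ≤ n² r M
  have hDM : D ≤ (n:ℝ)^2 * r * M := by
    obtain ⟨q, hqfeas, hqsum, hqle⟩ := key_distance hsub hn hr hp0feas hy
    have hqE : q ∈ E := by
      rw [hchar]
      refine ⟨hqfeas, ?_⟩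
      have h1 : g n r q = ‖astar‖^2 := by
        show ‖∑ i, q i‖^2 = _
        rw [hqsum]
      rw [h1, hgstar_eq]
    have h2 : Metric.infDist y E ≤ ‖y - q‖ := by
      rw [← dist_eq_norm]
      exact Metric.infDist_le_dist_of_mem hqE
    have h3 : Metric.infDist y E ≤ (n:ℝ) * Real.sqrt r * ‖a - astar‖ := le_trans h2 hqle
    have h4 : Metric.infDist y E ^2 ≤ ((n:ℝ) * Real.sqrt r * ‖a - astar‖)^2 :=
      pow_le_pow_left₀ Metric.infDist_nonneg h3 2
    rw [hD] at h4
    calc D ≤ ((n:ℝ) * Real.sqrt r * ‖a - astar‖)^2 := h4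
      _ = (n:ℝ)^2 * r * M := by
          rw [mul_pow, mul_pow, Real.sq_sqrt (by linarith : (0:ℝ) ≤ r), hM]
  have hDnonneg : 0 ≤ D := by rw [hDdef]; positivity
  -- per-block inequality
  have hstep : ∀ i : Fin r, Metric.infDist (T y i) E ^ 2 + g n r (T y i) - gstar ≤
      D + G + 2*⟪a, p i - y i⟫ := by
    intro i
    obtain ⟨hTj, hTmem, hTmin⟩ := hT y i
    have hd1 : Metric.infDist (T y i) E ≤ ‖T y i - p‖ := by
      rw [← dist_eq_norm]
      exact Metric.infDist_le_dist_of_mem hpE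
    have hd2 : Metric.infDist (T y i) E ^2 ≤ ‖T y i - p‖^2 :=
      pow_le_pow_left₀ Metric.infDist_nonneg hd1 2
    have hsplitnorm : ‖T y i - p‖^2 = ‖y - p‖^2 - ‖y i - p i‖^2 + ‖T y i i - p i‖^2 := by
      rw [PiLp.norm_sq_eq_of_L2, PiLp.norm_sq_eq_of_L2]
      rw [Finset.sum_eq_sum_sdiff_singleton_add (Finset.mem_univ i)
        (fun j => ‖(T y i - p) j‖^2),
        Finset.sum_eq_sum_sdiff_singleton_add (Finset.mem_univ i)
        (fun j => ‖(y - p) j‖^2)]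
      have h1 : ∀ j ∈ Finset.univ \ {i}, ‖(T y i - p) j‖^2 = ‖(y - p) j‖^2 := by
        intro j hj
        rw [Finset.mem_sdiff, Finset.mem_singleton] at hj
        have h2 : (T y i - p) j = (y - p) j := by
          show T y i j - p j = y j - p j
          rw [hTj j hj.2]
        rw [h2]
      rw [Finset.sum_congr rfl h1]
      have h3 : (T y i - p) i = T y i i - p i := rfl
      have h4 : (y - p) i = y i - p i := rfl
      rw [h3, h4]
      ring
    have hgsplit : (∑ j, T y i j) = a + (T y i i - y i) := by
      have h1 : (∑ j, T y i j) = ∑ j ∈ Finset.univ \ {i}, T y i j + T y i i :=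
        Finset.sum_eq_sum_sdiff_singleton_add (Finset.mem_univ i) _
      have h2 : ∑ j ∈ Finset.univ \ {i}, T y i j = ∑ j ∈ Finset.univ \ {i}, y j := by
        apply Finset.sum_congr rfl
        intro j hj
        rw [Finset.mem_sdiff, Finset.mem_singleton] at hj
        exact hTj j hj.2
      have h3 : a = ∑ j ∈ Finset.univ \ {i}, y j + y i := by
        rw [hA]
        exact Finset.sum_eq_sum_sdiff_singleton_add (Finset.mem_univ i) _
      rw [h1, h2, h3]
      abel
    have hgT : g n r (T y i) = ‖a + (T y i i - y i)‖^2 := by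
      show ‖∑ j, T y i j‖^2 = _
      rw [hgsplit]
    have hgTexp : g n r (T y i) = ‖a‖^2 + 2*⟪a, T y i i - y i⟫ + ‖T y i i - y i‖^2 := by
      rw [hgT, norm_add_sq_real]
    -- variational inequality
    have hgb : gradBlock n r y = (2:ℝ) • a := by
      show (2:ℝ) • (∑ j, y j) = (2:ℝ) • a
      rw [hA]
    have hVI : 0 ≤ ⟪(2:ℝ)•a + (2:ℝ)•(T y i i - y i), p i - T y i i⟫ := by
      set u := T y i i with hu
      set q := p i with hq
      apply nonneg_of_forall_ge (M := 2*‖q - u‖^2) (by positivity)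
      intro τ hτ0 hτ1
      have hz : u + τ•(q - u) ∈ basePolytope n (F i) := by
        have he : u + τ•(q - u) = (1-τ)•u + τ•q := by
          rw [smul_sub, sub_smul, one_smul]
          abel
        rw [he]
        exact convex_basePolytope (F i) hTmem (hpfeas i) (by linarith) (by linarith) (by ring)
      have hmin2 := hTmin _ hz
      rw [hgb] at hmin2
      -- expand
      have hexp1 : (u + τ•(q - u)) - y i = (u - y i) + τ•(q - u) := by abel
      have hexp2 : ⟪(2:ℝ)•a, (u + τ•(q - u)) - y i⟫
          = ⟪(2:ℝ)•a, u - y i⟫ + τ * ⟪(2:ℝ)•a, q - u⟫ := by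
        rw [hexp1, inner_add_right, real_inner_smul_right]
      have hexp3 : ‖(u + τ•(q - u)) - y i‖^2
          = ‖u - y i‖^2 + 2*τ*⟪u - y i, q - u⟫ + τ^2*‖q - u‖^2 := by
        rw [hexp1, norm_add_sq_real, real_inner_smul_right, norm_smul, Real.norm_eq_abs,
          mul_pow, sq_abs]
        ring
      rw [hexp2, hexp3] at hmin2
      have h5 : 0 ≤ τ * ⟪(2:ℝ)•a, q - u⟫ + 2*τ*⟪u - y i, q - u⟫ + τ^2*‖q - u‖^2 := by
        linarith [hmin2]
      have h6 : ⟪(2:ℝ)•a + (2:ℝ)•(u - y i), q - u⟫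
          = ⟪(2:ℝ)•a, q - u⟫ + 2*⟪u - y i, q - u⟫ := by
        rw [inner_add_left, real_inner_smul_left, real_inner_smul_left]
      rw [h6]
      have h7 : 0 ≤ ⟪(2:ℝ)•a, q - u⟫ + 2*⟪u - y i, q - u⟫ + τ*‖q - u‖^2 := by
        have h8 := mul_le_mul_of_nonneg_left h5 (le_of_lt (inv_pos.mpr hτ0))
        rw [mul_zero] at h8
        have h9 : τ⁻¹ * (τ * ⟪(2:ℝ)•a, q - u⟫ + 2*τ*⟪u - y i, q - u⟫ + τ^2*‖q - u‖^2)
            = ⟪(2:ℝ)•a, q - u⟫ + 2*⟪u - y i, q - u⟫ + τ*‖q - u‖^2 := by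
          field_simp
        rw [h9] at h8
        exact h8
      linarith [h7]
    -- combine
    have hcomb := block_ineq a (y i) (p i) (T y i i) hVI
    calc Metric.infDist (T y i) E ^ 2 + g n r (T y i) - gstar
        ≤ ‖T y i - p‖^2 + g n r (T y i) - gstar := by linarith [hd2]
      _ = ‖y - p‖^2 - ‖y i - p i‖^2 + ‖T y i i - p i‖^2
          + (‖a‖^2 + 2*⟪a, T y i i - y i⟫ + ‖T y i i - y i‖^2) - gstar := by
          rw [hsplitnorm, hgTexp]
      _ ≤ ‖y - p‖^2 - ‖y i - p i‖^2 + (‖y i - p i‖^2 + ‖a‖^2 + 2*⟪a, p i - y i⟫) - gstar := by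
          linarith [hcomb]
      _ = D + G + 2*⟪a, p i - y i⟫ := by
          rw [hDdef, hG, hga]
          ring
  -- sum over blocks
  have hsum2 : ∑ i : Fin r, (2*⟪a, p i - y i⟫) = gstar - g n r y - M := by
    have h1 : ∑ i : Fin r, (2*⟪a, p i - y i⟫) = 2*⟪a, (∑ i, p i) - (∑ i, y i)⟫ := by
      rw [← Finset.mul_sum, ← inner_sum]
      congr 2
      rw [Finset.sum_sub_distrib]
    rw [h1, hpsum, ← hA]
    exact hident
  have htotal : ∑ i : Fin r, (Metric.infDist (T y i) E ^ 2 + g n r (T y i) - gstar)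
      ≤ (r:ℝ)*(D + G) + (gstar - g n r y - M) := by
    calc ∑ i : Fin r, (Metric.infDist (T y i) E ^ 2 + g n r (T y i) - gstar)
        ≤ ∑ i : Fin r, (D + G + 2*⟪a, p i - y i⟫) := Finset.sum_le_sum (fun i _ => hstep i)
      _ = (∑ _i : Fin r, (D + G)) + ∑ i : Fin r, (2*⟪a, p i - y i⟫) :=
          Finset.sum_add_distrib
      _ = (r:ℝ)*(D + G) + (gstar - g n r y - M) := by
          rw [Finset.sum_const, Finset.card_univ, Fintype.card_fin, nsmul_eq_mul, hsum2]
  -- final numeric step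
  have hQpos : (0:ℝ) < (n:ℝ)^2*(r:ℝ)^2 + r := by positivity
  have hmain : 2*(r:ℝ)*(D + G) ≤ ((n:ℝ)^2*(r:ℝ)^2 + r)*(G + M) := by
    have h1 := mul_le_mul_of_nonneg_left hDM (show (0:ℝ) ≤ 2*r by linarith)
    have h2 : ((n:ℝ)^2*(r:ℝ)^2 - r)*M ≤ ((n:ℝ)^2*(r:ℝ)^2 - r)*G := by
      apply mul_le_mul_of_nonneg_left hMG
      have hn2 : (1:ℝ) ≤ (n:ℝ)^2 := by nlinarith [hn1]
      have hA1 : (r:ℝ)^2 ≤ (n:ℝ)^2*(r:ℝ)^2 := le_mul_of_one_le_left (by positivity) hn2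
      have hA2 : (r:ℝ) ≤ (r:ℝ)^2 := by nlinarith [hr1]
      linarith
    linarith [h1, h2]
  calc ∑ i : Fin r, (Metric.infDist (T y i) E ^ 2 + g n r (T y i) - gstar)
      ≤ (r:ℝ)*(D + G) + (gstar - g n r y - M) := htotal
    _ = (r:ℝ)*(D + G) - (G + M) := by rw [hG]; ring
    _ ≤ (r:ℝ)*((1 - 2/((n:ℝ)^2*(r:ℝ)^2 + r))*(D + G)) := by
        have h3 : (r:ℝ)*((1 - 2/((n:ℝ)^2*(r:ℝ)^2 + r))*(D + G))
            = (r:ℝ)*(D + G) - (2*(r:ℝ)*(D + G))/((n:ℝ)^2*(r:ℝ)^2 + r) := by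
          field_simp
        have h4 : (2*(r:ℝ)*(D + G))/((n:ℝ)^2*(r:ℝ)^2 + r) ≤ G + M := by
          rw [div_le_iff₀ hQpos]
          calc 2*(r:ℝ)*(D + G) ≤ ((n:ℝ)^2*(r:ℝ)^2 + r)*(G + M) := hmain
            _ = (G + M)*((n:ℝ)^2*(r:ℝ)^2 + r) := by ring
        rw [h3]
        linarith
    _ = (r:ℝ)*((1 - 2/((n:ℝ)^2*(r:ℝ)^2 + r))*(Metric.infDist y E ^ 2 + g n r y - gstar)) := by
        rw [hG, ← hD]
        ring

end S3

/-- Linear convergence of the random coordinate descent method for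
(Prox-DSM): the average over all index sequences `(i₀,…,i_k) ∈ {1,…,r}^{k+1}` (each with
weight `r^{-(k+1)}`) of `d(y_{k+1}, E)² + g(y_{k+1}) - g*` is at most
`(1 - 2/(n²r² + r))^{k+1} (d(y₀, E)² + g(y₀) - g*)`. -/
theorem statement3 (n r : ℕ) (hn : 1 ≤ n) (hr : 1 ≤ r)
    (F : Fin r → Finset (Fin n) → ℝ)
    (hsub : ∀ i, Submodular (F i)) (hnorm : ∀ i, F i ∅ = 0)
    (T : Vec n r → Fin r → Vec n r)
    (hT : ∀ (y : Vec n r) (i : Fin r),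
      (∀ j, j ≠ i → T y i j = y j) ∧
      T y i i ∈ basePolytope n (F i) ∧
      (∀ z ∈ basePolytope n (F i),
        ⟪gradBlock n r y, T y i i - y i⟫ + ‖T y i i - y i‖ ^ 2
          ≤ ⟪gradBlock n r y, z - y i⟫ + ‖z - y i‖ ^ 2))
    (y0 : Vec n r) (hy0 : y0 ∈ feas n r F)
    (E : Set (Vec n r)) (hE : E = {y : Vec n r | IsOptimal n r F y})
    (gstar : ℝ) (hgstar : IsLeast (g n r '' feas n r F) gstar) :
    ∀ k : ℕ,
      ∑ s : Fin (k + 1) → Fin r, ((r : ℝ) ^ (k + 1))⁻¹ *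
          (Metric.infDist (rcdmIter n r T y0 (k + 1) s) E ^ 2
            + g n r (rcdmIter n r T y0 (k + 1) s) - gstar)
        ≤ (1 - 2 / ((n : ℝ) ^ 2 * (r : ℝ) ^ 2 + r)) ^ (k + 1)
            * (Metric.infDist y0 E ^ 2 + g n r y0 - gstar) := by
  classical
  intro k
  have hr0 : (0:ℝ) < r := by exact_mod_cast hr
  have hn1 : (1:ℝ) ≤ (n:ℝ) := by exact_mod_cast hn
  have hr1 : (1:ℝ) ≤ (r:ℝ) := by exact_mod_cast hr
  set ρ := (1 - 2 / ((n : ℝ) ^ 2 * (r : ℝ) ^ 2 + r)) with hρ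
  have hρnonneg : 0 ≤ ρ := by
    have ha1 : (1:ℝ) ≤ (n:ℝ)^2 := by nlinarith [hn1]
    have ha2 : (1:ℝ) ≤ (r:ℝ)^2 := by nlinarith [hr1]
    have ha3 := mul_le_mul ha1 ha2 (by norm_num) (by linarith)
    have hQ2 : (2:ℝ) ≤ (n:ℝ)^2*(r:ℝ)^2 + r := by
      rw [one_mul] at ha3
      linarith
    have hQpos : (0:ℝ) < (n:ℝ)^2*(r:ℝ)^2 + r := by linarith
    have h1 : 2 / ((n:ℝ)^2*(r:ℝ)^2 + r) ≤ 1 := by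
      rw [div_le_one hQpos]; linarith
    rw [hρ]; linarith
  -- feasibility of all iterates
  have hTfeas : ∀ (y : Vec n r), y ∈ feas n r F → ∀ i, T y i ∈ feas n r F := by
    intro y hy i j
    obtain ⟨hTj, hTmem, _⟩ := hT y i
    by_cases hj : j = i
    · rw [hj]; exact hTmem
    · rw [hTj j hj]; exact hy j
  have hfeas_iter : ∀ (k : ℕ) (s : Fin k → Fin r), rcdmIter n r T y0 k s ∈ feas n r F := by
    intro k
    induction k with
    | zero => intro s; exact hy0
    | succ k ih =>
        intro s
        show T (rcdmIter n r T y0 k (fun j => s j.castSucc)) (s (Fin.last k)) ∈ feas n r F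
        exact hTfeas _ (ih _) _
  -- main induction
  have hkey : ∀ k : ℕ, (∑ s : Fin k → Fin r, (Metric.infDist (rcdmIter n r T y0 k s) E ^ 2
      + g n r (rcdmIter n r T y0 k s) - gstar))
      ≤ ((r:ℝ)*ρ)^k * (Metric.infDist y0 E ^ 2 + g n r y0 - gstar) := by
    intro k
    induction k with
    | zero =>
        rw [pow_zero, one_mul]
        rw [Fintype.sum_unique (fun s : Fin 0 → Fin r =>
          Metric.infDist (rcdmIter n r T y0 0 s) E ^ 2 + g n r (rcdmIter n r T y0 0 s) - gstar)]
        exact le_rfl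
    | succ k ih =>
        have hiter : ∀ (t : Fin k → Fin r) (i : Fin r),
            rcdmIter n r T y0 (k+1) (Fin.snoc t i) = T (rcdmIter n r T y0 k t) i := by
          intro t i
          have h1 : (fun j : Fin k => (Fin.snoc t i : Fin (k+1) → Fin r) j.castSucc) = t := by
            funext j
            simp
          have h2 : (Fin.snoc t i : Fin (k+1) → Fin r) (Fin.last k) = i := by simp
          show T (rcdmIter n r T y0 k (fun j => (Fin.snoc t i : Fin (k+1) → Fin r) j.castSucc))
              ((Fin.snoc t i : Fin (k+1) → Fin r) (Fin.last k)) = T (rcdmIter n r T y0 k t) i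
          rw [h1, h2]
        calc (∑ s : Fin (k+1) → Fin r, (Metric.infDist (rcdmIter n r T y0 (k+1) s) E ^ 2
              + g n r (rcdmIter n r T y0 (k+1) s) - gstar))
            = ∑ p : (Fin k → Fin r) × Fin r,
              (Metric.infDist (T (rcdmIter n r T y0 k p.1) p.2) E ^ 2
                + g n r (T (rcdmIter n r T y0 k p.1) p.2) - gstar) := by
              refine (Fintype.sum_equiv
                ⟨fun p => Fin.snoc p.1 p.2,
                 fun s => (fun j => s j.castSucc, s (Fin.last k)), ?_, ?_⟩ _ _ ?_).symm
              · intro p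
                refine Prod.ext (funext fun j => ?_) ?_ <;> simp
              · intro s
                funext j
                refine Fin.lastCases ?_ (fun i => ?_) j <;> simp
              · intro p
                simp only [Equiv.coe_fn_mk]
                rw [hiter p.1 p.2]
          _ = ∑ t : Fin k → Fin r, ∑ i : Fin r,
              (Metric.infDist (T (rcdmIter n r T y0 k t) i) E ^ 2
                + g n r (T (rcdmIter n r T y0 k t) i) - gstar) :=
              Fintype.sum_prod_type _
          _ ≤ ∑ t : Fin k → Fin r, (r:ℝ)*(ρ * (Metric.infDist (rcdmIter n r T y0 k t) E ^ 2
                + g n r (rcdmIter n r T y0 k t) - gstar)) := by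
              apply Finset.sum_le_sum
              intro t _
              exact S3.onestep hsub hn hr T hT E hE gstar hgstar (hfeas_iter k t)
          _ = ((r:ℝ)*ρ) * ∑ t : Fin k → Fin r, (Metric.infDist (rcdmIter n r T y0 k t) E ^ 2
                + g n r (rcdmIter n r T y0 k t) - gstar) := by
              rw [Finset.mul_sum]
              apply Finset.sum_congr rfl
              intro t _
              ring
          _ ≤ ((r:ℝ)*ρ) * (((r:ℝ)*ρ)^k * (Metric.infDist y0 E ^ 2 + g n r y0 - gstar)) := by
              apply mul_le_mul_of_nonneg_left ih
              exact mul_nonneg (le_of_lt hr0) hρnonneg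
          _ = ((r:ℝ)*ρ)^(k+1) * (Metric.infDist y0 E ^ 2 + g n r y0 - gstar) := by
              rw [pow_succ]
              ring
  have h := hkey (k+1)
  have hrpow : (0:ℝ) < (r:ℝ)^(k+1) := by positivity
  calc ∑ s : Fin (k + 1) → Fin r, ((r : ℝ) ^ (k + 1))⁻¹ *
          (Metric.infDist (rcdmIter n r T y0 (k + 1) s) E ^ 2
            + g n r (rcdmIter n r T y0 (k + 1) s) - gstar)
      = ((r : ℝ) ^ (k + 1))⁻¹ * ∑ s : Fin (k + 1) → Fin r,
          (Metric.infDist (rcdmIter n r T y0 (k + 1) s) E ^ 2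
            + g n r (rcdmIter n r T y0 (k + 1) s) - gstar) := by
        rw [Finset.mul_sum]
    _ ≤ ((r : ℝ) ^ (k + 1))⁻¹ * (((r:ℝ)*ρ)^(k+1) * (Metric.infDist y0 E ^ 2 + g n r y0 - gstar)) := by
        apply mul_le_mul_of_nonneg_left h
        positivity
    _ = ρ^(k+1) * (Metric.infDist y0 E ^ 2 + g n r y0 - gstar) := by
        rw [mul_pow]
        field_simp
end
end

section
/- Let y ∈ 𝒴 and i ∈ {1,…,r}, and let y' be the vector agreeing with y in every block except block i, where y'^(i) is the unique minimizer over z ∈ B(F_i) of ⟨∇_i g(y), z − y^(i)⟩ + ‖z − y^(i)‖². Let y* be an optimal solution of (Prox-DSM) closest to y. Then ‖y' − y*‖² ≤ ‖y − y*‖² + ⟨∇_i g(y), (y*)^(i) − y^(i)⟩ − ( g(y') − g(y) ). -/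
open scoped RealInnerProductSpace Pointwise

noncomputable section

/-- One step of block coordinate descent: if `y'` agrees with `y`
outside block `i` and `y'⁽ⁱ⁾` minimizes `⟨∇ᵢ g(y), z - y⁽ⁱ⁾⟩ + ‖z - y⁽ⁱ⁾‖²` over
`z ∈ B(Fᵢ)`, and `y*` is an optimal solution of (Prox-DSM) closest to `y`, then
`‖y' - y*‖² ≤ ‖y - y*‖² + ⟨∇ᵢ g(y), (y*)⁽ⁱ⁾ - y⁽ⁱ⁾⟩ - (g(y') - g(y))`. -/
theorem statement5 (n r : ℕ) (hn : 1 ≤ n) (hr : 1 ≤ r)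
    (F : Fin r → Finset (Fin n) → ℝ)
    (hsub : ∀ i, Submodular (F i)) (hnorm : ∀ i, F i ∅ = 0)
    (y y' ystar : Vec n r) (i : Fin r)
    (hy : y ∈ feas n r F)
    (hagree : ∀ j, j ≠ i → y' j = y j)
    (hmem : y' i ∈ basePolytope n (F i))
    (hmin : ∀ z ∈ basePolytope n (F i),
      ⟪gradBlock n r y, y' i - y i⟫ + ‖y' i - y i‖ ^ 2
        ≤ ⟪gradBlock n r y, z - y i⟫ + ‖z - y i‖ ^ 2)
    (hopt : IsOptimal n r F ystar)
    (hclosest : ∀ z : Vec n r, IsOptimal n r F z → ‖y - ystar‖ ≤ ‖y - z‖) :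
    ‖y' - ystar‖ ^ 2
      ≤ ‖y - ystar‖ ^ 2 + ⟪gradBlock n r y, ystar i - y i⟫ - (g n r y' - g n r y) := by
  classical
  set G := gradBlock n r y with hG
  set d : EuclideanSpace ℝ (Fin n) := y' i - y i with hd
  set v : EuclideanSpace ℝ (Fin n) := ystar i - y' i with hv
  have hstar : ystar i ∈ basePolytope n (F i) := hopt.1 i
  -- convexity: y' i + t • v ∈ B(F i) for t ∈ [0,1]
  have hconv : ∀ t : ℝ, 0 ≤ t → t ≤ 1 → y' i + t • v ∈ basePolytope n (F i) := by
    intro t ht0 ht1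
    have hsum : ∀ A : Finset (Fin n), ∑ j ∈ A, (y' i + t • v) j
        = (1 - t) * (∑ j ∈ A, y' i j) + t * (∑ j ∈ A, ystar i j) := by
      intro A
      rw [Finset.mul_sum, Finset.mul_sum, ← Finset.sum_add_distrib]
      refine Finset.sum_congr rfl fun j _ => ?_
      simp [hv, PiLp.add_apply, PiLp.smul_apply, PiLp.sub_apply, smul_eq_mul]
      ring
    constructor
    · intro A
      have h1 := hmem.1 A
      have h2 := hstar.1 A
      rw [hsum A]
      nlinarith
    · rw [hsum Finset.univ, hmem.2, hstar.2]; ring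
  -- variational inequality
  have hVI : 0 ≤ ⟪G, v⟫ + 2 * ⟪d, v⟫ := by
    have key : ∀ t : ℝ, 0 < t → t ≤ 1 → 0 ≤ (⟪G, v⟫ + 2 * ⟪d, v⟫) + t * ‖v‖ ^ 2 := by
      intro t ht0 ht1
      have h := hmin _ (hconv t ht0.le ht1)
      have he : y' i + t • v - y i = d + t • v := by rw [hd]; abel
      have habs : ‖t‖ = t := abs_of_pos ht0
      rw [he, inner_add_right, real_inner_smul_right, norm_add_sq_real,
        real_inner_smul_right, norm_smul, habs] at h
      nlinarith [h, ht0, sq_nonneg (‖v‖ : ℝ)]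
    by_contra hcon
    push_neg at hcon
    set A := ⟪G, v⟫ + 2 * ⟪d, v⟫ with hA
    set B := ‖v‖ ^ 2 with hB
    have hB0 : 0 ≤ B := by positivity
    have ht : (0:ℝ) < min 1 (-A / (2 * (B + 1))) := by
      apply lt_min one_pos
      apply div_pos (by linarith) (by linarith)
    have h := key _ ht (min_le_left _ _)
    have h2 : min 1 (-A / (2 * (B + 1))) * B ≤ (-A / (2 * (B + 1))) * B :=
      mul_le_mul_of_nonneg_right (min_le_right _ _) hB0
    have h3 : (-A / (2 * (B + 1))) * B < -A := by
      rw [div_mul_eq_mul_div, div_lt_iff₀ (by linarith)]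
      nlinarith
    linarith
  -- block decomposition identities
  have hsub' : y' - y = fun j => y' j - y j := rfl
  have hblock : ∀ j, (y' - y) j = if j = i then d else 0 := by
    intro j
    by_cases hji : j = i
    · subst hji; simp [hd, PiLp.sub_apply]
    · simp [hji, PiLp.sub_apply, hagree j hji]
  have hinner1 : ⟪y - ystar, y' - y⟫ = ⟪y i - ystar i, d⟫ := by
    rw [PiLp.inner_apply]
    rw [Finset.sum_eq_single i (fun j _ hji => by
        simp [PiLp.sub_apply, hagree j hji]) (by simp)]
    simp [PiLp.sub_apply, hd]
  have hnorm2 : ‖y' - y‖ ^ 2 = ‖d‖ ^ 2 := by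
    rw [← real_inner_self_eq_norm_sq, ← real_inner_self_eq_norm_sq, PiLp.inner_apply]
    rw [Finset.sum_eq_single i (fun j _ hji => by
        simp [PiLp.sub_apply, hagree j hji]) (by simp)]
    simp [PiLp.sub_apply, hd]
  have hT1 : ‖y' - ystar‖ ^ 2
      = ‖y - ystar‖ ^ 2 + 2 * ⟪y i - ystar i, d⟫ + ‖d‖ ^ 2 := by
    have he : y' - ystar = (y - ystar) + (y' - y) := by abel
    rw [he, norm_add_sq_real, hinner1, hnorm2]
  -- sum identity
  have hsumy : ∑ j, y' j = (∑ j, y j) + d := by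
    have : ∑ j, y' j - ∑ j, y j = d := by
      rw [← Finset.sum_sub_distrib]
      rw [Finset.sum_eq_single i (fun j _ hji => by rw [hagree j hji]; simp) (by simp)]
    linear_combination (norm := abel) this
  have hT2 : g n r y' - g n r y = ⟪G, d⟫ + ‖d‖ ^ 2 := by
    rw [g, g, hsumy, norm_add_sq_real, hG, gradBlock, real_inner_smul_left]
    ring
  -- relate inner products
  have hvd : ystar i - y i = v + d := by rw [hv, hd]; abel
  have hGvd : ⟪G, ystar i - y i⟫ = ⟪G, v⟫ + ⟪G, d⟫ := by
    rw [hvd, inner_add_right]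
  have hdv : ⟪d, v⟫ = - ⟪y i - ystar i, d⟫ - ‖d‖ ^ 2 := by
    have : v = (ystar i - y i) - d := by rw [hvd]; abel
    rw [this, inner_sub_right, real_inner_self_eq_norm_sq]
    have : ⟪d, ystar i - y i⟫ = - ⟪y i - ystar i, d⟫ := by
      rw [real_inner_comm, ← inner_neg_left]
      congr 1; abel
    rw [this]
  rw [hT1, hT2, hGvd]
  linarith [hVI, hdv.symm.le, hdv.le]
end
end

section
/- Let y ∈ 𝒴 and, for each i ∈ {1,…,r}, let y'_i be the vector agreeing with y in every block except block i, where (y'_i)^(i) is the unique minimizer over z ∈ B(F_i) of ⟨∇_i g(y), z − y^(i)⟩ + ‖z − y^(i)‖². Let y* be an optimal solution of (Prox-DSM) closest to y and g* the optimal value. Then (1/r) Σ_{i=1}^r [ ‖y'_i − y*‖² + g(y'_i) − g* ] ≤ ‖y − y*‖² + g(y) − g* + (1/r) ⟨∇g(y), y* − y⟩. -/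
open scoped RealInnerProductSpace Pointwise

noncomputable section

section AuxLemmas

variable {E : Type*} [NormedAddCommGroup E] [InnerProductSpace ℝ E]

lemma aux_expand_sq (a v : E) (t : ℝ) :
    ‖a + t • v‖ ^ 2 = ‖a‖ ^ 2 + 2 * t * ⟪a, v⟫ + t ^ 2 * ‖v‖ ^ 2 := by
  rw [norm_add_sq_real, real_inner_smul_right, norm_smul, Real.norm_eq_abs, mul_pow, sq_abs]
  ring

lemma aux_small_t (b c : ℝ) (hb : 0 ≤ b)
    (h : ∀ t : ℝ, 0 < t → t ≤ 1 → 0 ≤ t * c + t ^ 2 * b) : 0 ≤ c := by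
  by_contra hc
  push_neg at hc
  have h2b : (0:ℝ) < 2 * b + 1 := by linarith
  set t := min 1 (-c / (2 * b + 1)) with ht
  have htpos : 0 < t := lt_min one_pos (div_pos (neg_pos.mpr hc) h2b)
  have ht1 : t ≤ 1 := min_le_left _ _
  have ht2 : t * (2 * b + 1) ≤ -c := by
    have h3 : t ≤ -c / (2 * b + 1) := min_le_right _ _
    calc t * (2 * b + 1) ≤ (-c / (2 * b + 1)) * (2 * b + 1) := by nlinarith
    _ = -c := by field_simp
  have h0 := h t htpos ht1
  nlinarith [mul_le_mul_of_nonneg_left ht2 htpos.le, mul_pos htpos htpos,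
    mul_nonneg (mul_nonneg htpos.le htpos.le) hb]

end AuxLemmas

lemma aux_seg_mem {n : ℕ} {Fi : Finset (Fin n) → ℝ} {a z : EuclideanSpace ℝ (Fin n)}
    (ha : a ∈ basePolytope n Fi) (hz : z ∈ basePolytope n Fi) {t : ℝ}
    (ht0 : 0 ≤ t) (ht1 : t ≤ 1) : a + t • (z - a) ∈ basePolytope n Fi := by
  obtain ⟨ha1, ha2⟩ := ha
  obtain ⟨hz1, hz2⟩ := hz
  have hsum : ∀ A : Finset (Fin n), ∑ k ∈ A, (a + t • (z - a)) k
      = ∑ k ∈ A, a k + t * (∑ k ∈ A, z k - ∑ k ∈ A, a k) := by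
    intro A
    simp only [PiLp.add_apply, PiLp.smul_apply, PiLp.sub_apply, smul_eq_mul,
      Finset.sum_add_distrib, Finset.mul_sum, mul_sub, Finset.sum_sub_distrib]
  constructor
  · intro A
    rw [hsum A]
    nlinarith [ha1 A, hz1 A]
  · rw [hsum Finset.univ, ha2, hz2]
    ring

/-- Expected progress of one random block update: with `y'_i` the result
of updating block `i` of `y` by the block minimizer, `y*` an optimal solution of
(Prox-DSM) closest to `y`, and `g* = g(y*)` the optimal value,
`(1/r) ∑ᵢ (‖y'_i - y*‖² + g(y'_i) - g*) ≤ ‖y - y*‖² + g(y) - g* + (1/r)⟨∇g(y), y* - y⟩`. -/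
theorem statement6 (n r : ℕ) (hn : 1 ≤ n) (hr : 1 ≤ r)
    (F : Fin r → Finset (Fin n) → ℝ)
    (hsub : ∀ i, Submodular (F i)) (hnorm : ∀ i, F i ∅ = 0)
    (y : Vec n r) (y' : Fin r → Vec n r) (ystar : Vec n r)
    (hy : y ∈ feas n r F)
    (hagree : ∀ i : Fin r, ∀ j, j ≠ i → y' i j = y j)
    (hmem : ∀ i : Fin r, y' i i ∈ basePolytope n (F i))
    (hmin : ∀ i : Fin r, ∀ z ∈ basePolytope n (F i),
      ⟪gradBlock n r y, y' i i - y i⟫ + ‖y' i i - y i‖ ^ 2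
        ≤ ⟪gradBlock n r y, z - y i⟫ + ‖z - y i‖ ^ 2)
    (hopt : IsOptimal n r F ystar)
    (hclosest : ∀ z : Vec n r, IsOptimal n r F z → ‖y - ystar‖ ≤ ‖y - z‖) :
    (1 / (r : ℝ)) * ∑ i : Fin r, (‖y' i - ystar‖ ^ 2 + g n r (y' i) - g n r ystar)
      ≤ ‖y - ystar‖ ^ 2 + g n r y - g n r ystar
          + (1 / (r : ℝ)) * ⟪gradg n r y, ystar - y⟫ := by
  have hrpos : (0:ℝ) < r := by exact_mod_cast hr
  have hr0 : ((r:ℝ)) ≠ 0 := ne_of_gt hrpos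
  have hgbi : ∀ w : EuclideanSpace ℝ (Fin n),
      ⟪gradBlock n r y, w⟫ = 2 * ⟪∑ j, y j, w⟫ :=
    fun w => real_inner_smul_left (∑ j, y j) w 2
  -- strengthened block optimality
  have strong : ∀ i : Fin r,
      2 * ⟪∑ j, y j, y' i i - y i⟫ + ‖y' i i - y i‖ ^ 2 + ‖ystar i - y' i i‖ ^ 2
        ≤ 2 * ⟪∑ j, y j, ystar i - y i⟫ + ‖ystar i - y i‖ ^ 2 := by
    intro i
    have hzmem : ystar i ∈ basePolytope n (F i) := hopt.1 i
    have key_t : ∀ t : ℝ, 0 < t → t ≤ 1 →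
        0 ≤ t * (2 * ⟪∑ j, y j, ystar i - y' i i⟫
              + 2 * ⟪y' i i - y i, ystar i - y' i i⟫)
            + t ^ 2 * ‖ystar i - y' i i‖ ^ 2 := by
      intro t ht0 ht1
      have hm := hmin i (y' i i + t • (ystar i - y' i i))
        (aux_seg_mem (hmem i) hzmem ht0.le ht1)
      have e1 : y' i i + t • (ystar i - y' i i) - y i
          = (y' i i - y i) + t • (ystar i - y' i i) := by abel
      rw [e1, hgbi, hgbi, aux_expand_sq, inner_add_right, real_inner_smul_right] at hm
      nlinarith [hm]
    have hc := aux_small_t (‖ystar i - y' i i‖ ^ 2)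
      (2 * ⟪∑ j, y j, ystar i - y' i i⟫ + 2 * ⟪y' i i - y i, ystar i - y' i i⟫)
      (sq_nonneg _) key_t
    have e2 : ystar i - y i = (y' i i - y i) + (ystar i - y' i i) := by abel
    rw [e2, inner_add_right, norm_add_sq_real]
    linarith
  -- per-block inequality
  have key : ∀ i : Fin r,
      ‖y' i - ystar‖ ^ 2 + g n r (y' i) - g n r ystar
        ≤ ‖y - ystar‖ ^ 2 + g n r y - g n r ystar
            + ⟪gradBlock n r y, ystar i - y i⟫ := by
    intro i
    have hsplit : y' i - ystar = (y - ystar) + (y' i - y) := by abel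
    have hinner : ⟪y - ystar, y' i - y⟫ = ⟪y i - ystar i, y' i i - y i⟫ := by
      rw [PiLp.inner_apply]
      rw [Finset.sum_eq_single i (fun j _ hj => by
          simp [PiLp.sub_apply, hagree i j hj])
        (fun h => absurd (Finset.mem_univ i) h)]
      simp [PiLp.sub_apply]
    have hnorm2 : ‖y' i - y‖ ^ 2 = ‖y' i i - y i‖ ^ 2 := by
      rw [PiLp.norm_sq_eq_of_L2]
      rw [Finset.sum_eq_single i (fun j _ hj => by
          simp [PiLp.sub_apply, hagree i j hj])
        (fun h => absurd (Finset.mem_univ i) h)]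
      simp [PiLp.sub_apply]
    have hA : ‖y' i - ystar‖ ^ 2
        = ‖y - ystar‖ ^ 2 + 2 * ⟪y i - ystar i, y' i i - y i⟫
            + ‖y' i i - y i‖ ^ 2 := by
      rw [hsplit, norm_add_sq_real, hinner, hnorm2]
    have hdiff : ∑ j, (y' i j - y j) = y' i i - y i :=
      Finset.sum_eq_single i (fun j _ hj => by rw [hagree i j hj, sub_self])
        (fun h => absurd (Finset.mem_univ i) h)
    have h2 : (∑ j, y' i j) - (∑ j, y j) = y' i i - y i := by
      rw [← Finset.sum_sub_distrib]; exact hdiff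
    have h1 : ∑ j, y' i j = (∑ j, y j) + (y' i i - y i) := by
      rw [← h2]; abel
    have hB : g n r (y' i)
        = g n r y + 2 * ⟪∑ j, y j, y' i i - y i⟫ + ‖y' i i - y i‖ ^ 2 := by
      simp only [g]
      rw [h1, norm_add_sq_real]
    have hflip : ⟪y i - ystar i, y' i i - y i⟫
        = -⟪ystar i - y i, y' i i - y i⟫ := by
      rw [show y i - ystar i = -(ystar i - y i) by abel, inner_neg_left]
    have e3 : ystar i - y' i i = (ystar i - y i) - (y' i i - y i) := by abel
    have hs2 := strong i
    rw [e3, norm_sub_sq_real (ystar i - y i) (y' i i - y i)] at hs2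
    rw [hA, hB, hgbi]
    linarith [hs2, hflip]
  -- sum up
  have hsum : ∑ i : Fin r, (‖y' i - ystar‖ ^ 2 + g n r (y' i) - g n r ystar)
      ≤ ∑ i : Fin r, (‖y - ystar‖ ^ 2 + g n r y - g n r ystar
          + ⟪gradBlock n r y, ystar i - y i⟫) :=
    Finset.sum_le_sum (fun i _ => key i)
  have hgradg : (⟪gradg n r y, ystar - y⟫ : ℝ)
      = ∑ i : Fin r, ⟪gradBlock n r y, ystar i - y i⟫ := by
    rw [PiLp.inner_apply]
    refine Finset.sum_congr rfl (fun j _ => ?_)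
    simp only [gradg, PiLp.sub_apply, WithLp.ofLp_toLp]
  have hRHS : ∑ i : Fin r, (‖y - ystar‖ ^ 2 + g n r y - g n r ystar
        + ⟪gradBlock n r y, ystar i - y i⟫)
      = (r:ℝ) * (‖y - ystar‖ ^ 2 + g n r y - g n r ystar)
        + ⟪gradg n r y, ystar - y⟫ := by
    rw [Finset.sum_add_distrib, Finset.sum_const, Finset.card_univ, Fintype.card_fin,
      nsmul_eq_mul, hgradg]
  have hfin : (1 / (r:ℝ)) * ∑ i : Fin r, (‖y' i - ystar‖ ^ 2 + g n r (y' i) - g n r ystar)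
      ≤ (1 / (r:ℝ)) * ((r:ℝ) * (‖y - ystar‖ ^ 2 + g n r y - g n r ystar)
          + ⟪gradg n r y, ystar - y⟫) := by
    apply mul_le_mul_of_nonneg_left (hsum.trans (le_of_eq hRHS)) (by positivity)
  have heq : (1 / (r:ℝ)) * ((r:ℝ) * (‖y - ystar‖ ^ 2 + g n r y - g n r ystar)
        + ⟪gradg n r y, ystar - y⟫)
      = ‖y - ystar‖ ^ 2 + g n r y - g n r ystar
          + (1 / (r:ℝ)) * ⟪gradg n r y, ystar - y⟫ := by
    field_simp
  exact heq ▸ hfin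
end
end
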